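/- arXiv:1806.10243 — 5 statements merged into one kernel-verified Lean document; each statement's English description precedes it below -/
import Mathlib

section
/- Let n < m be positive integers and let α₁,…,αₙ, β_{n+1},…,β_m be positive integers with α₁+⋯+αₙ = β_{n+1}+⋯+β_m. Then the ratio u_k(α,β) = (α₁k)!⋯(αₙk)!/((β_{n+1}k)!⋯(β_m k)!) is an integer for every natural number k if and only if the dilated polytope nΔ(α,β) contains no interior lattice points. -/
open Pointwise Finset

/-- Split a sum over `Fin m` into the first `n` and the rest. -/
lemma my_sum_split {M : Type*} [AddCommMonoid M] {n m : ℕ} (h : n ≤ m) (g : Fin m → M) :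
    ∑ i, g i = (∑ i : Fin n, g (Fin.castLE h i)) +
      ∑ j : Fin (m - n), g ⟨n + j, by omega⟩ := by
  have hm : n + (m - n) = m := by omega
  rw [← Fintype.sum_equiv (finCongr hm) (fun i => g (finCongr hm i)) g (fun i => rfl)]
  rw [Fin.sum_univ_add]
  congr 1

/-- The Landau step function. -/
noncomputable def FF {n q : ℕ} (α : Fin n → ℕ) (β : Fin q → ℕ) (s : ℝ) : ℤ :=
  (∑ i, ⌊(α i : ℝ) * s⌋) - ∑ j, ⌊(β j : ℝ) * s⌋

lemma my_floor_natdiv (N d : ℕ) : ⌊(N : ℝ) / (d : ℝ)⌋ = ((N / d : ℕ) : ℤ) := by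
  rcases Nat.eq_zero_or_pos d with rfl | hd
  · simp
  · rw [← Int.natCast_floor_eq_floor (by positivity), Nat.floor_div_natCast, Nat.floor_natCast]

lemma my_floor_mul_div (a k p e : ℕ) :
    ⌊(a : ℝ) * ((k : ℝ) / (p : ℝ) ^ e)⌋ = ((a * k / p ^ e : ℕ) : ℤ) := by
  have : (a : ℝ) * ((k : ℝ) / (p : ℝ) ^ e) = ((a * k : ℕ) : ℝ) / ((p ^ e : ℕ) : ℝ) := by
    push_cast; ring
  rw [this, my_floor_natdiv]

lemma landau_dvd {n q : ℕ} (α : Fin n → ℕ) (β : Fin q → ℕ)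
    (hα : ∀ i, 0 < α i) (hβ : ∀ j, 0 < β j) (hsum : ∑ i, α i = ∑ j, β j)
    (hF : ∀ s : ℝ, 0 ≤ s → 0 ≤ FF α β s) (k : ℕ) :
    (∏ j, Nat.factorial (β j * k)) ∣ ∏ i, Nat.factorial (α i * k) := by
  have hne1 : (∏ j, Nat.factorial (β j * k)) ≠ 0 :=
    Finset.prod_ne_zero_iff.2 fun j _ => Nat.factorial_ne_zero _
  have hne2 : (∏ i, Nat.factorial (α i * k)) ≠ 0 :=
    Finset.prod_ne_zero_iff.2 fun i _ => Nat.factorial_ne_zero _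
  rw [← Nat.factorization_le_iff_dvd hne1 hne2, Finsupp.le_def]
  intro p
  by_cases hp : p.Prime
  · haveI : Fact p.Prime := ⟨hp⟩
    set A := ∑ i, α i with hA
    set B := A * k + 1 with hB
    have hαA : ∀ i, α i ≤ A := fun i => Finset.single_le_sum (fun i _ => Nat.zero_le _) (Finset.mem_univ i)
    have hβA : ∀ j, β j ≤ A := fun j => hsum ▸ Finset.single_le_sum (fun j _ => Nat.zero_le _) (Finset.mem_univ j)
    rw [Nat.factorization_prod (fun _ _ => Nat.factorial_ne_zero _),
        Nat.factorization_prod (fun _ _ => Nat.factorial_ne_zero _)]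
    rw [Finset.sum_apply', Finset.sum_apply']
    have hterm : ∀ (c : ℕ), c ≤ A → ((c * k).factorial.factorization) p
        = ∑ e ∈ Finset.Ico 1 B, c * k / p ^ e := by
      intro c hc
      rw [Nat.factorization_def _ hp]
      exact padicValNat_factorial (by
        calc Nat.log p (c * k) ≤ c * k := Nat.log_le_self _ _
        _ ≤ A * k := Nat.mul_le_mul_right _ hc
        _ < B := Nat.lt_succ_self _)
    rw [Finset.sum_congr rfl fun j _ => hterm (β j) (hβA j),
        Finset.sum_congr rfl fun i _ => hterm (α i) (hαA i)]
    rw [Finset.sum_comm, Finset.sum_comm (s := Finset.univ)]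
    refine Finset.sum_le_sum fun e _ => ?_
    have h0 := hF ((k : ℝ) / (p : ℝ) ^ e) (by positivity)
    unfold FF at h0
    rw [sub_nonneg, Finset.sum_congr rfl fun j _ => my_floor_mul_div (β j) k p e,
        Finset.sum_congr rfl fun i _ => my_floor_mul_div (α i) k p e,
        ← Nat.cast_sum, ← Nat.cast_sum, Nat.cast_le] at h0
    exact h0
  · rw [Nat.factorization_eq_zero_of_not_prime _ hp, Nat.factorization_eq_zero_of_not_prime _ hp]

lemma FF_fract {n q : ℕ} (α : Fin n → ℕ) (β : Fin q → ℕ)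
    (hsum : ∑ i, α i = ∑ j, β j) (s : ℝ) :
    FF α β (Int.fract s) = FF α β s := by
  have h : ∀ a : ℕ, ⌊(a : ℝ) * Int.fract s⌋ = ⌊(a : ℝ) * s⌋ - a * ⌊s⌋ := by
    intro a
    rw [Int.fract]
    have : (a : ℝ) * (s - ⌊s⌋) = (a : ℝ) * s - ((a * ⌊s⌋ : ℤ) : ℝ) := by push_cast; ring
    rw [this, Int.floor_sub_intCast]
  unfold FF
  rw [Finset.sum_congr rfl fun i _ => h (α i), Finset.sum_congr rfl fun j _ => h (β j),
      Finset.sum_sub_distrib, Finset.sum_sub_distrib, ← Finset.sum_mul, ← Finset.sum_mul]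
  have : ((∑ i, (α i : ℤ))) = ∑ j, (β j : ℤ) := by exact_mod_cast congrArg Nat.cast hsum
  rw [this]; ring

lemma exists_right_const {n q : ℕ} (hn : 0 < n) (hq : 0 < q)
    (α : Fin n → ℕ) (β : Fin q → ℕ) (hα : ∀ i, 0 < α i) (hβ : ∀ j, 0 < β j) (s0 : ℝ) :
    ∃ ε > 0, ∀ x, s0 ≤ x → x < s0 + ε →
      (∀ i, ⌊(α i : ℝ) * x⌋ = ⌊(α i : ℝ) * s0⌋) ∧
      (∀ j, ⌊(β j : ℝ) * x⌋ = ⌊(β j : ℝ) * s0⌋) := by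
  haveI : Nonempty (Fin n) := ⟨⟨0, hn⟩⟩
  haveI : Nonempty (Fin q) := ⟨⟨0, hq⟩⟩
  have key : ∀ a : ℕ, 0 < a → ∀ x ε, 0 < ε →
      ε ≤ ((⌊(a : ℝ) * s0⌋ : ℝ) + 1 - a * s0) / a → s0 ≤ x → x < s0 + ε →
      ⌊(a : ℝ) * x⌋ = ⌊(a : ℝ) * s0⌋ := by
    intro a ha x ε hε hεle hx1 hx2
    have ha' : (0 : ℝ) < a := by exact_mod_cast ha
    rw [Int.floor_eq_iff]
    constructor
    · calc ((⌊(a : ℝ) * s0⌋ : ℝ)) ≤ a * s0 := Int.floor_le _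
        _ ≤ a * x := by nlinarith
    · calc (a : ℝ) * x < a * (s0 + ε) := by nlinarith
        _ ≤ a * s0 + a * (((⌊(a : ℝ) * s0⌋ : ℝ) + 1 - a * s0) / a) := by nlinarith
        _ = ⌊(a : ℝ) * s0⌋ + 1 := by field_simp; ring
  set g1 : Fin n → ℝ := fun i => ((⌊(α i : ℝ) * s0⌋ : ℝ) + 1 - α i * s0) / α i with hg1
  set g2 : Fin q → ℝ := fun j => ((⌊(β j : ℝ) * s0⌋ : ℝ) + 1 - β j * s0) / β j with hg2
  have hg1pos : ∀ i, 0 < g1 i := fun i => by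
    have : (0:ℝ) < α i := by exact_mod_cast hα i
    have h2 := Int.lt_floor_add_one ((α i : ℝ) * s0)
    exact div_pos (by linarith) this
  have hg2pos : ∀ j, 0 < g2 j := fun j => by
    have : (0:ℝ) < β j := by exact_mod_cast hβ j
    have h2 := Int.lt_floor_add_one ((β j : ℝ) * s0)
    exact div_pos (by linarith) this
  set ε := min (Finset.univ.inf' Finset.univ_nonempty g1)
    (Finset.univ.inf' Finset.univ_nonempty g2) with hε
  refine ⟨ε, lt_min ((Finset.lt_inf'_iff _).2 fun i _ => hg1pos i)
    ((Finset.lt_inf'_iff _).2 fun j _ => hg2pos j), fun x hx1 hx2 => ⟨fun i => ?_, fun j => ?_⟩⟩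
  · refine key (α i) (hα i) x ε (lt_min ((Finset.lt_inf'_iff _).2 fun i _ => hg1pos i)
      ((Finset.lt_inf'_iff _).2 fun j _ => hg2pos j)) ?_ hx1 hx2
    exact le_trans (min_le_left _ _) (Finset.inf'_le _ (Finset.mem_univ i))
  · refine key (β j) (hβ j) x ε (lt_min ((Finset.lt_inf'_iff _).2 fun i _ => hg1pos i)
      ((Finset.lt_inf'_iff _).2 fun j _ => hg2pos j)) ?_ hx1 hx2
    exact le_trans (min_le_right _ _) (Finset.inf'_le _ (Finset.mem_univ j))

lemma fact_prod_fact {q : ℕ} (c : Fin q → ℕ) (k p B A : ℕ) (hp : p.Prime)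
    (hc : ∀ j, c j ≤ A) (hB : A * k < B) :
    (∏ j, Nat.factorial (c j * k)).factorization p
      = ∑ e ∈ Finset.Ico 1 B, ∑ j, c j * k / p ^ e := by
  haveI : Fact p.Prime := ⟨hp⟩
  rw [Nat.factorization_prod (fun _ _ => Nat.factorial_ne_zero _), Finset.sum_apply']
  rw [Finset.sum_congr rfl fun j _ => ?_, Finset.sum_comm]
  rw [Nat.factorization_def _ hp]
  exact padicValNat_factorial (by
    calc Nat.log p (c j * k) ≤ c j * k := Nat.log_le_self _ _
      _ ≤ A * k := Nat.mul_le_mul_right _ (hc j)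
      _ < B := hB)

lemma landau_converse {n q : ℕ} (hn : 0 < n) (hq : 0 < q)
    (α : Fin n → ℕ) (β : Fin q → ℕ) (hα : ∀ i, 0 < α i) (hβ : ∀ j, 0 < β j)
    (hsum : ∑ i, α i = ∑ j, β j)
    (hD : ∀ k : ℕ, (∏ j, Nat.factorial (β j * k)) ∣ ∏ i, Nat.factorial (α i * k)) :
    ∀ s : ℝ, 0 ≤ s → 0 ≤ FF α β s := by
  by_contra hc
  push_neg at hc
  obtain ⟨s, hs0, hFs⟩ := hc
  set s0 := Int.fract s with hs0def
  have hFs0 : FF α β s0 < 0 := by rw [FF_fract α β hsum]; exact hFs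
  have hs00 : 0 ≤ s0 := Int.fract_nonneg s
  have hs01 : s0 < 1 := Int.fract_lt_one s
  have hs0pos : 0 < s0 := by
    rcases lt_or_eq_of_le hs00 with h | h
    · exact h
    · exfalso; rw [← h] at hFs0; simp [FF] at hFs0
  obtain ⟨ε0, hε0, hconst⟩ := exists_right_const hn hq α β hα hβ s0
  set ε := min ε0 (1 - s0) with hεdef
  have hεpos : 0 < ε := lt_min hε0 (by linarith)
  have hεle : ε ≤ 1 - s0 := min_le_right _ _
  set A := ∑ i, α i with hA
  have hA1 : 1 ≤ A := le_trans (hα ⟨0, hn⟩) (Finset.single_le_sum (fun i _ => Nat.zero_le _) (Finset.mem_univ _))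
  have hαA : ∀ i, α i ≤ A := fun i => Finset.single_le_sum (fun i _ => Nat.zero_le _) (Finset.mem_univ i)
  have hβA : ∀ j, β j ≤ A := fun j => hsum ▸ Finset.single_le_sum (fun j _ => Nat.zero_le _) (Finset.mem_univ j)
  obtain ⟨p, hpN, hp⟩ := Nat.exists_infinite_primes (A + ⌈1 / ε⌉₊ + 1)
  have hppos : (0 : ℝ) < p := by exact_mod_cast hp.pos
  have hpA : A < p := by omega
  have hpε : 1 / ε < p := by
    have h1 : (⌈1 / ε⌉₊ : ℝ) < p := by exact_mod_cast (by omega : ⌈1 / ε⌉₊ < p)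
    exact lt_of_le_of_lt (Nat.le_ceil _) h1
  have hεp : 1 < (p : ℝ) * ε := by
    rw [div_lt_iff₀ hεpos] at hpε; linarith
  set k := ⌈(p : ℝ) * s0⌉₊ with hk
  have hkub : (k : ℝ) < (p : ℝ) * s0 + 1 := Nat.ceil_lt_add_one (by positivity)
  have hklb : (p : ℝ) * s0 ≤ k := Nat.le_ceil _
  have hkp : k < p := by
    have : (k : ℝ) < p := by nlinarith
    exact_mod_cast this
  set x := (k : ℝ) / p with hx
  have hx1 : s0 ≤ x := by rw [hx, le_div_iff₀ hppos]; linarith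
  have hx2 : x < s0 + ε := by rw [hx, div_lt_iff₀ hppos]; nlinarith
  obtain ⟨hcα, hcβ⟩ := hconst x hx1 (lt_of_lt_of_le hx2 (by linarith [min_le_left ε0 (1 - s0)]))
  -- FF x < 0
  have hFx : FF α β x < 0 := by
    unfold FF at hFs0 ⊢
    rw [Finset.sum_congr rfl fun i _ => hcα i, Finset.sum_congr rfl fun j _ => hcβ j]
    exact hFs0
  -- translate to nat division sums
  have hdivlt : ∑ i, α i * k / p < ∑ j, β j * k / p := by
    unfold FF at hFx
    rw [sub_neg] at hFx
    have e1 : ∀ a : ℕ, ⌊(a : ℝ) * x⌋ = ((a * k / p : ℕ) : ℤ) := by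
      intro a
      have := my_floor_mul_div a k p 1
      rwa [pow_one, pow_one] at this
    rw [Finset.sum_congr rfl fun i _ => e1 (α i), Finset.sum_congr rfl fun j _ => e1 (β j),
        ← Nat.cast_sum, ← Nat.cast_sum, Nat.cast_lt] at hFx
    exact hFx
  -- now contradict divisibility at k
  have hdvd := hD k
  have hne1 : (∏ j, Nat.factorial (β j * k)) ≠ 0 :=
    Finset.prod_ne_zero_iff.2 fun j _ => Nat.factorial_ne_zero _
  have hne2 : (∏ i, Nat.factorial (α i * k)) ≠ 0 :=
    Finset.prod_ne_zero_iff.2 fun i _ => Nat.factorial_ne_zero _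
  rw [← Nat.factorization_le_iff_dvd hne1 hne2, Finsupp.le_def] at hdvd
  have hdp := hdvd p
  set B := A * k + 1 with hB
  rw [fact_prod_fact β k p B A hp hβA (Nat.lt_succ_self _),
      fact_prod_fact α k p B A hp hαA (Nat.lt_succ_self _)] at hdp
  have hk1 : 1 ≤ k := by
    rw [hk, Nat.one_le_ceil_iff]; positivity
  have hB2 : 2 ≤ B := by
    have : 1 ≤ A * k := Nat.one_le_iff_ne_zero.2 (by positivity)
    omega
  have hzero : ∀ e ∈ Finset.Ico 2 B, ∀ c : ℕ, c ≤ A → c * k / p ^ e = 0 := by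
    intro e he c hcA
    rw [Finset.mem_Ico] at he
    apply Nat.div_eq_of_lt
    calc c * k ≤ A * k := Nat.mul_le_mul_right _ hcA
      _ ≤ (p - 1) * (p - 1) := Nat.mul_le_mul (by omega) (by omega)
      _ < p ^ 2 := by
          rw [pow_two]
          have h1 : p - 1 < p := Nat.sub_lt hp.pos one_pos
          calc (p-1)*(p-1) ≤ (p-1)*p := Nat.mul_le_mul_left _ (le_of_lt h1)
            _ < p * p := (Nat.mul_lt_mul_right hp.pos).2 h1
      _ ≤ p ^ e := Nat.pow_le_pow_right hp.pos he.1
  rw [Finset.sum_eq_sum_Ico_succ_bot (by omega : 1 < B), Finset.sum_eq_sum_Ico_succ_bot (by omega : 1 < B),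
      Finset.sum_eq_zero (fun e he => Finset.sum_eq_zero fun j _ => hzero e he (β j) (hβA j)),
      Finset.sum_eq_zero (fun e he => Finset.sum_eq_zero fun i _ => hzero e he (α i) (hαA i))] at hdp
  simp only [pow_one, add_zero] at hdp
  omega

set_option maxHeartbeats 2000000 in
theorem poly_main (n m : ℕ) (hn : 0 < n) (hnm : n < m)
    (α : Fin n → ℕ) (β : Fin (m - n) → ℕ)
    (hα : ∀ i, 0 < α i) (hβ : ∀ j, 0 < β j)
    (hsum : ∑ i, α i = ∑ j, β j)
    (b : Fin m → ℝ)
    (hb : ∀ i : Fin m, b i = if h : (i : ℕ) < n then (α ⟨i, h⟩ : ℝ)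
      else -(β ⟨(i : ℕ) - n, Nat.sub_lt_sub_right (by omega) i.isLt⟩ : ℝ))
    (hεx : ∀ s0 : ℝ, ∃ ε > 0, ∀ x, s0 ≤ x → x < s0 + ε →
      (∀ i, ⌊(α i : ℝ) * x⌋ = ⌊(α i : ℝ) * s0⌋) ∧
      (∀ j, ⌊(β j : ℝ) * x⌋ = ⌊(β j : ℝ) * s0⌋)) :
    (∃ x : Fin m → ℤ, (fun i => (x i : ℝ)) ∈ interior ((n : ℝ) • convexHull ℝ
      ({0} ∪ Set.range (fun i : Fin m => Pi.single i (1 : ℝ)) ∪ {b}))) ↔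
    ∃ s : ℝ, 0 ≤ s ∧ FF α β s < 0 := by
  have hnm' : n ≤ m := le_of_lt hnm
  have hb1 : ∀ i : Fin n, b (Fin.castLE hnm' i) = (α i : ℝ) := by
    intro i
    rw [hb, dif_pos (show ((Fin.castLE hnm' i : Fin m) : ℕ) < n from i.isLt)]
    congr 1
  have hb2 : ∀ j : Fin (m - n), b (⟨n + (j : ℕ), by omega⟩ : Fin m) = -(β j : ℝ) := by
    intro j
    rw [hb, dif_neg (by simp)]
    congr 2
    simp
  have hbsum : ∑ i, b i = 0 := by
    rw [my_sum_split hnm' b, Finset.sum_congr rfl fun i _ => hb1 i,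
        Finset.sum_congr rfl fun j _ => hb2 j]
    rw [Finset.sum_neg_distrib]
    have : ((∑ i, (α i : ℝ))) = ∑ j, (β j : ℝ) := by exact_mod_cast congrArg Nat.cast hsum
    rw [this]; ring
  set S : Set (Fin m → ℝ) :=
    {0} ∪ Set.range (fun i : Fin m => Pi.single i (1 : ℝ)) ∪ {b} with hS
  set K : Set (Fin m → ℝ) := convexHull ℝ S with hK
  set W : Set (Fin m → ℝ) :=
    {y | ∃ t : ℝ, 0 ≤ t ∧ (∀ i, t * b i ≤ y i) ∧ t + ∑ i, y i ≤ 1} with hW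
  set U : Set (Fin m → ℝ) :=
    {y | ∃ t : ℝ, 0 < t ∧ (∀ i, t * b i < y i) ∧ t + ∑ i, y i < 1} with hU
  -- W is convex
  have hWconv : Convex ℝ W := by
    rintro y1 ⟨t1, ht1, hc1, hs1⟩ y2 ⟨t2, ht2, hc2, hs2⟩ a c ha hc hac
    refine ⟨a * t1 + c * t2, by positivity, fun i => ?_, ?_⟩
    · have e1 : a * (t1 * b i) ≤ a * y1 i := mul_le_mul_of_nonneg_left (hc1 i) ha
      have e2 : c * (t2 * b i) ≤ c * y2 i := mul_le_mul_of_nonneg_left (hc2 i) hc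
      have : (a • y1 + c • y2) i = a * y1 i + c * y2 i := rfl
      rw [this]; nlinarith
    · have : ∑ i, (a • y1 + c • y2) i = a * ∑ i, y1 i + c * ∑ i, y2 i := by
        simp only [Pi.add_apply, Pi.smul_apply, smul_eq_mul]
        rw [Finset.sum_add_distrib, ← Finset.mul_sum, ← Finset.mul_sum]
      rw [this]; nlinarith
  -- S ⊆ W
  have hSW : S ⊆ W := by
    rintro y (⟨rfl | ⟨i, rfl⟩⟩ | rfl)
    · exact ⟨0, le_refl _, fun i => by simp, by simp⟩
    · refine ⟨0, le_refl _, fun j => by simp [Pi.single_apply]; positivity, ?_⟩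
      simp [Pi.single_apply]
    · exact ⟨1, zero_le_one, fun i => by simp, by rw [hbsum]; simp⟩
  have hKW : K ⊆ W := convexHull_min hSW hWconv
  -- W ⊆ K
  have hWK : W ⊆ K := by
    rintro y ⟨t, ht, hcoord, hsum1⟩
    have hμsum : ∑ i, (y i - t * b i) = ∑ i, y i := by
      rw [Finset.sum_sub_distrib, ← Finset.mul_sum, hbsum]; ring
    set w : Fin m ⊕ Fin 2 → ℝ :=
      Sum.elim (fun i => y i - t * b i)
        (fun r => if r = 0 then 1 - t - ∑ i, y i else t) with hw
    set z : Fin m ⊕ Fin 2 → (Fin m → ℝ) :=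
      Sum.elim (fun i => Pi.single i (1 : ℝ)) (fun r => if r = 0 then 0 else b) with hz
    have hw1 : ∑ p, w p = 1 := by
      rw [Fintype.sum_sum_type]
      simp only [hw, Sum.elim_inl, Sum.elim_inr, Fin.sum_univ_two]
      norm_num [hμsum]
      ring
    have hw0 : ∀ p ∈ Finset.univ, 0 ≤ w p := by
      rintro (i | r) _
      · simp only [hw, Sum.elim_inl]
        exact sub_nonneg.2 (hcoord i)
      · fin_cases r <;> simp [hw] <;> linarith
    have hzK : ∀ p ∈ Finset.univ, z p ∈ K := by
      rintro (i | r) _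
      · refine subset_convexHull ℝ S ?_
        simp only [hz, Sum.elim_inl, hS]
        exact Or.inl (Or.inr ⟨i, rfl⟩)
      · refine subset_convexHull ℝ S ?_
        simp only [hz, Sum.elim_inr, hS]
        fin_cases r
        · exact Or.inl (Or.inl (by simp))
        · exact Or.inr (by simp)
    have := (convex_convexHull ℝ S).sum_mem hw0 hw1 hzK
    have hyeq : ∑ p, w p • z p = y := by
      rw [Fintype.sum_sum_type]
      have e1 : ∑ i : Fin m, w (Sum.inl i) • z (Sum.inl i)
          = fun j => y j - t * b j := by
        have : ∀ i : Fin m, w (Sum.inl i) • z (Sum.inl i)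
            = Pi.single i (y i - t * b i) := by
          intro i
          show (y i - t * b i) • (Pi.single i (1:ℝ) : Fin m → ℝ) = (Pi.single i (y i - t * b i) : Fin m → ℝ)
          rw [← Pi.single_smul' i (y i - t * b i) (1:ℝ), smul_eq_mul, mul_one]
        rw [Finset.sum_congr rfl fun i _ => this i, Finset.univ_sum_single]
      have e2 : ∑ r : Fin 2, w (Sum.inr r) • z (Sum.inr r) = t • b := by
        rw [Fin.sum_univ_two]
        show (1 - t - ∑ i, y i) • (0 : Fin m → ℝ) + t • b = t • b
        rw [smul_zero, zero_add]
      rw [e1, e2]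
      funext j
      simp only [Pi.add_apply, Pi.smul_apply, smul_eq_mul]
      ring
    rwa [hyeq] at this
  have hKeqW : K = W := Set.Subset.antisymm hKW hWK
  -- U is open
  have hUopen : IsOpen U := by
    have : U = ⋃ t : ℝ, {y : Fin m → ℝ |
        0 < t ∧ (∀ i, t * b i < y i) ∧ t + ∑ i, y i < 1} := by
      ext y
      simp only [hU, Set.mem_setOf_eq, Set.mem_iUnion]
    rw [this]
    refine isOpen_iUnion fun t => ?_
    by_cases ht : 0 < t
    · have : {y : Fin m → ℝ | 0 < t ∧ (∀ i, t * b i < y i) ∧ t + ∑ i, y i < 1}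
          = (⋂ i, {y : Fin m → ℝ | t * b i < y i}) ∩ {y | t + ∑ i, y i < 1} := by
        ext y; simp [ht, Set.mem_iInter]
      rw [this]
      refine IsOpen.inter (isOpen_iInter_of_finite fun i => ?_) ?_
      · exact isOpen_Ioi.preimage (continuous_apply i)
      · exact (isOpen_Iio.preimage (continuous_const.add
          (continuous_finset_sum _ fun i _ => continuous_apply i)))
    · have : {y : Fin m → ℝ | 0 < t ∧ (∀ i, t * b i < y i) ∧ t + ∑ i, y i < 1} = ∅ := by
        ext y; simp [ht]
      rw [this]; exact isOpen_empty
  have hUW : U ⊆ W := by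
    rintro y ⟨t, ht, hcoord, hs⟩
    exact ⟨t, le_of_lt ht, fun i => le_of_lt (hcoord i), le_of_lt hs⟩
  -- the explicit interior point
  set zs : Fin m → ℝ := fun i => (b i + 1) / (m + 2) with hzs
  have hm2 : (0:ℝ) < (m:ℝ) + 2 := by positivity
  have hzsU : ∃ tz : ℝ, tz = 1/((m:ℝ)+2) ∧ 0 < tz ∧ (∀ i, tz * b i < zs i)
      ∧ tz + ∑ i, zs i < 1 := by
    refine ⟨1/((m:ℝ)+2), rfl, by positivity, fun i => ?_, ?_⟩
    · rw [hzs]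
      rw [div_mul_eq_mul_div, one_mul, div_lt_div_iff₀ hm2 hm2]
      nlinarith
    · have : ∑ i, zs i = ((m:ℝ)) / ((m:ℝ)+2) := by
        rw [hzs]
        rw [← Finset.sum_div, Finset.sum_add_distrib, hbsum]
        simp [Finset.card_univ]
      rw [this]
      rw [div_add_div _ _ (ne_of_gt hm2) (ne_of_gt hm2), div_lt_one (by positivity)]
      nlinarith
  obtain ⟨tz, htzdef, htz0, htzc, htzs⟩ := hzsU
  have hzsW : zs ∈ W := hUW ⟨tz, htz0, htzc, htzs⟩
  -- interior K = U
  have hIntK : interior K = U := by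
    apply Set.Subset.antisymm
    · intro y hy
      -- find δ > 0 with y + δ • (y - zs) ∈ K
      have hcont : Continuous (fun δ : ℝ => y + δ • (y - zs)) := by
        continuity
      have h0mem : (fun δ : ℝ => y + δ • (y - zs)) 0 ∈ interior K := by simpa using hy
      have hopen : IsOpen ((fun δ : ℝ => y + δ • (y - zs)) ⁻¹' interior K) :=
        isOpen_interior.preimage hcont
      obtain ⟨r, hr, hball⟩ := Metric.isOpen_iff.1 hopen 0 h0mem
      set δ := r/2 with hδ
      have hδ0 : 0 < δ := by positivity
      have hmem : y + δ • (y - zs) ∈ K := by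
        have : δ ∈ Metric.ball (0:ℝ) r := by
          rw [Metric.mem_ball, Real.dist_eq, sub_zero, abs_of_pos hδ0]
          linarith
        exact interior_subset (hball this)
      obtain ⟨t', ht'0, ht'c, ht's⟩ := hKW hmem
      -- now y = (y' + δ zs)/(1+δ)
      have h1δ : (0:ℝ) < 1 + δ := by linarith
      refine ⟨(t' + δ * tz) / (1 + δ), by positivity, fun i => ?_, ?_⟩
      · have hyi : y i = ((y + δ • (y - zs)) i + δ * zs i) / (1 + δ) := by
          simp only [Pi.add_apply, Pi.smul_apply, Pi.sub_apply, smul_eq_mul]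
          field_simp
          ring
        have h1 := ht'c i
        have h2 := htzc i
        have h3 : (t' + δ * tz) * b i < (y + δ • (y - zs)) i + δ * zs i := by
          nlinarith [mul_lt_mul_of_pos_left h2 hδ0]
        rw [hyi, div_mul_eq_mul_div]
        exact (div_lt_div_iff_of_pos_right h1δ).2 h3
      · have hys : ∑ i, y i = (∑ i, (y + δ • (y - zs)) i + δ * ∑ i, zs i) / (1 + δ) := by
          simp only [Pi.add_apply, Pi.smul_apply, Pi.sub_apply, smul_eq_mul]
          rw [Finset.sum_add_distrib, Finset.sum_congr rfl
            (fun i _ => mul_sub δ (y i) (zs i)), Finset.sum_sub_distrib,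
            ← Finset.mul_sum, ← Finset.mul_sum]
          field_simp
          ring
        rw [hys, ← add_div, div_lt_one h1δ]
        nlinarith [mul_lt_mul_of_pos_left htzs hδ0]
    · exact interior_maximal (hUW.trans (hKeqW ▸ hWK)) hUopen
  -- final equivalence
  have hnpos : (0:ℝ) < n := by exact_mod_cast hn
  have hn0 : ((n:ℝ)) ≠ 0 := ne_of_gt hnpos
  have hint : interior ((n : ℝ) • K) = (n:ℝ) • U := by
    rw [interior_smul₀ hn0, hIntK]
  constructor
  · rintro ⟨x, hx⟩
    rw [hint, Set.mem_smul_set_iff_inv_smul_mem₀ hn0] at hx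
    obtain ⟨t, ht0, htc, hts⟩ := hx
    set T := (n:ℝ) * t with hT
    have hTpos : 0 < T := by positivity
    have hxc : ∀ i : Fin m, T * b i < (x i : ℝ) := by
      intro i
      have h1 := htc i
      have h2 : ((n:ℝ)⁻¹ • fun i => (x i : ℝ)) i = (n:ℝ)⁻¹ * (x i : ℝ) := rfl
      rw [h2] at h1
      have := mul_lt_mul_of_pos_left h1 hnpos
      calc T * b i = (n:ℝ) * (t * b i) := by rw [hT]; ring
        _ < (n:ℝ) * ((n:ℝ)⁻¹ * (x i:ℝ)) := this
        _ = (x i : ℝ) := by field_simp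
    have hxs : T + ∑ i, (x i : ℝ) < n := by
      have h1 := hts
      have h2 : ∑ i, ((n:ℝ)⁻¹ • fun i => (x i : ℝ)) i = (n:ℝ)⁻¹ * ∑ i, (x i:ℝ) := by
        rw [Finset.mul_sum]; rfl
      rw [h2] at h1
      have := mul_lt_mul_of_pos_left h1 hnpos
      calc T + ∑ i, (x i:ℝ) = (n:ℝ) * (t + (n:ℝ)⁻¹ * ∑ i, (x i:ℝ)) := by
            rw [hT]; field_simp
        _ < (n:ℝ) * 1 := this
        _ = n := mul_one _
    refine ⟨T, le_of_lt hTpos, ?_⟩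
    have hfl1 : ∀ i : Fin n, ⌊(α i:ℝ) * T⌋ ≤ (x (Fin.castLE hnm' i) : ℤ) - 1 := by
      intro i
      have := hxc (Fin.castLE hnm' i)
      rw [hb1 i] at this
      have h2 : ⌊(α i:ℝ) * T⌋ < x (Fin.castLE hnm' i) := Int.floor_lt.2 (by rw [mul_comm]; exact this)
      omega
    have hfl2 : ∀ j : Fin (m - n), -(x (⟨n + (j:ℕ), by omega⟩ : Fin m)) ≤ ⌊(β j:ℝ) * T⌋ := by
      intro j
      have := hxc (⟨n + (j:ℕ), by omega⟩ : Fin m)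
      rw [hb2 j] at this
      apply Int.le_floor.2
      push_cast
      nlinarith
    have hsx : (∑ i : Fin m, x i) ≤ (n:ℤ) - 1 := by
      have h1 : ((∑ i : Fin m, x i : ℤ) : ℝ) < n := by
        push_cast
        linarith [hxs, hTpos]
      have : (∑ i : Fin m, x i) < (n:ℤ) := by exact_mod_cast h1
      omega
    have hsplitx := my_sum_split hnm' (fun i => x i)
    have A1 : ∑ i : Fin n, ⌊(α i:ℝ) * T⌋ ≤ (∑ i : Fin n, x (Fin.castLE hnm' i)) - n := by
      calc ∑ i : Fin n, ⌊(α i:ℝ) * T⌋ ≤ ∑ i : Fin n, ((x (Fin.castLE hnm' i) : ℤ) - 1) :=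
            Finset.sum_le_sum fun i _ => hfl1 i
        _ = (∑ i : Fin n, x (Fin.castLE hnm' i)) - n := by
            rw [Finset.sum_sub_distrib]
            simp [Finset.card_univ]
    have A2 : -(∑ j : Fin (m-n), x (⟨n + (j:ℕ), by omega⟩ : Fin m))
        ≤ ∑ j : Fin (m-n), ⌊(β j:ℝ) * T⌋ := by
      rw [← Finset.sum_neg_distrib]
      exact Finset.sum_le_sum fun j _ => hfl2 j
    unfold FF
    omega
  · rintro ⟨s, hs0, hFs⟩
    -- reduce to the unit interval
    set s0 := Int.fract s with hs0def
    have hFs0 : FF α β s0 < 0 := by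
      have h : ∀ a : ℕ, ⌊(a : ℝ) * Int.fract s⌋ = ⌊(a : ℝ) * s⌋ - a * ⌊s⌋ := by
        intro a
        rw [Int.fract]
        have : (a : ℝ) * (s - ⌊s⌋) = (a : ℝ) * s - ((a * ⌊s⌋ : ℤ) : ℝ) := by push_cast; ring
        rw [this, Int.floor_sub_intCast]
      unfold FF at hFs ⊢
      rw [Finset.sum_congr rfl fun i _ => h (α i), Finset.sum_congr rfl fun j _ => h (β j),
          Finset.sum_sub_distrib, Finset.sum_sub_distrib, ← Finset.sum_mul, ← Finset.sum_mul]
      have hc : ((∑ i, (α i : ℤ))) = ∑ j, (β j : ℤ) := by exact_mod_cast congrArg Nat.cast hsum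
      rw [hc]
      linarith [hFs]
    have hs00 : 0 ≤ s0 := Int.fract_nonneg s
    have hs01 : s0 < 1 := Int.fract_lt_one s
    obtain ⟨ε, hε, hconst⟩ := hεx s0
    obtain ⟨s', hs'irr, hs'lb, hs'ub⟩ := exists_irrational_btwn
      (show s0 < min (s0 + ε) 1 from lt_min (by linarith) hs01)
    have hs'1 : s' < 1 := lt_of_lt_of_le hs'ub (min_le_right _ _)
    have hs'pos : 0 < s' := lt_of_le_of_lt hs00 hs'lb
    obtain ⟨hcα, hcβ⟩ := hconst s' (le_of_lt hs'lb)
      (lt_of_lt_of_le hs'ub (min_le_left _ _))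
    have hFs' : FF α β s' ≤ -1 := by
      have : FF α β s' = FF α β s0 := by
        unfold FF
        rw [Finset.sum_congr rfl fun i _ => hcα i, Finset.sum_congr rfl fun j _ => hcβ j]
      omega
    set x : Fin m → ℤ := fun i => if h : (i : ℕ) < n then ⌊(α ⟨i, h⟩ : ℝ) * s'⌋ + 1
      else -⌊(β ⟨(i : ℕ) - n, Nat.sub_lt_sub_right (by omega) i.isLt⟩ : ℝ) * s'⌋ with hxdef
    have hx1 : ∀ i : Fin n, x (Fin.castLE hnm' i) = ⌊(α i : ℝ) * s'⌋ + 1 := by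
      intro i
      simp only [hxdef]
      rw [dif_pos (show ((Fin.castLE hnm' i : Fin m) : ℕ) < n from i.isLt)]
      congr 2
    have hx2 : ∀ j : Fin (m-n), x (⟨n + (j:ℕ), by omega⟩ : Fin m) = -⌊(β j : ℝ) * s'⌋ := by
      intro j
      simp only [hxdef]
      rw [dif_neg (by simp)]
      congr 2
      simp
    have hkey : ∀ i : Fin m, s' * b i < (x i : ℝ) := by
      intro i
      rw [hb i]
      by_cases h : (i : ℕ) < n
      · rw [dif_pos h]
        have : x i = ⌊(α ⟨(i:ℕ), h⟩ : ℝ) * s'⌋ + 1 := by simp only [hxdef]; rw [dif_pos h]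
        rw [this]
        push_cast
        rw [mul_comm]
        exact Int.lt_floor_add_one _
      · rw [dif_neg h]
        have : x i = -⌊(β ⟨(i:ℕ) - n, Nat.sub_lt_sub_right (by omega) i.isLt⟩ : ℝ) * s'⌋ := by
          simp only [hxdef]; rw [dif_neg h]
        rw [this]
        set u := (β ⟨(i:ℕ) - n, Nat.sub_lt_sub_right (by omega) i.isLt⟩ : ℝ) * s' with hu
        have hirr : Irrational u := by
          rw [hu]
          exact Irrational.natCast_mul hs'irr (hβ _).ne'
        have hlt : (⌊u⌋ : ℝ) < u := lt_of_le_of_ne (Int.floor_le u) ((hirr.ne_int ⌊u⌋).symm)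
        push_cast
        nlinarith
    have hsumx : (∑ i : Fin m, x i) = FF α β s' + n := by
      rw [my_sum_split hnm' (fun i => x i)]
      rw [Finset.sum_congr rfl fun i _ => hx1 i, Finset.sum_congr rfl fun j _ => hx2 j]
      unfold FF
      rw [Finset.sum_add_distrib, Finset.sum_neg_distrib]
      simp [Finset.card_univ]
      ring
    refine ⟨x, ?_⟩
    rw [hint, Set.mem_smul_set_iff_inv_smul_mem₀ hn0]
    refine ⟨s' / n, by positivity, fun i => ?_, ?_⟩
    · have h2 : ((n:ℝ)⁻¹ • fun i => (x i : ℝ)) i = (x i : ℝ) / n := by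
        rw [show ((n:ℝ)⁻¹ • fun i => (x i : ℝ)) i = (n:ℝ)⁻¹ * (x i:ℝ) from rfl,
            inv_mul_eq_div]
      rw [h2, div_mul_eq_mul_div, div_lt_div_iff₀ hnpos hnpos]
      exact mul_lt_mul_of_pos_right (hkey i) hnpos
    · have h2 : ∑ i, ((n:ℝ)⁻¹ • fun i => (x i : ℝ)) i = (n:ℝ)⁻¹ * ∑ i, (x i:ℝ) := by
        rw [Finset.mul_sum]; rfl
      rw [h2, inv_mul_eq_div, ← add_div, div_lt_one hnpos]
      have hcast : (∑ i, (x i : ℝ)) = ((∑ i : Fin m, x i : ℤ) : ℝ) := by push_cast; rfl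
      have hc2 : (∑ i, (x i : ℝ)) = ((FF α β s' : ℤ) : ℝ) + n := by
        rw [hcast, hsumx]; push_cast; ring
      have hF : ((FF α β s' : ℤ) : ℝ) ≤ -1 := by exact_mod_cast hFs'
      linarith


/-- The ratio u_k(α,β) is an integer for every k iff nΔ(α,β)
contains no interior lattice points. -/
theorem stmt_0 (n m : ℕ) (hn : 0 < n) (hnm : n < m)
    (α : Fin n → ℕ) (β : Fin (m - n) → ℕ)
    (hα : ∀ i, 0 < α i) (hβ : ∀ j, 0 < β j)
    (hsum : ∑ i, α i = ∑ j, β j)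
    (b : Fin m → ℝ)
    (hb : ∀ i : Fin m, b i = if h : (i : ℕ) < n then (α ⟨i, h⟩ : ℝ)
      else -(β ⟨(i : ℕ) - n, by have := i.isLt; omega⟩ : ℝ))
    (Δ : Set (Fin m → ℝ))
    (hΔ : Δ = convexHull ℝ
      ({0} ∪ Set.range (fun i : Fin m => Pi.single i (1 : ℝ)) ∪ {b})) :
    (∀ k : ℕ, (∏ j, Nat.factorial (β j * k)) ∣ ∏ i, Nat.factorial (α i * k)) ↔
      ¬ ∃ x : Fin m → ℤ, (fun i => (x i : ℝ)) ∈ interior ((n : ℝ) • Δ) := by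
  subst hΔ
  have hq : 0 < m - n := by omega
  have hp := poly_main n m hn hnm α β hα hβ hsum b hb
    (fun s0 => exists_right_const hn hq α β hα hβ s0)
  constructor
  · intro hD hex
    obtain ⟨s, hs0, hFs⟩ := hp.1 hex
    have := landau_converse hn hq α β hα hβ hsum hD s hs0
    omega
  · intro hnox k
    refine landau_dvd α β hα hβ hsum (fun s hs => ?_) k
    by_contra hneg
    push_neg at hneg
    exact hnox (hp.2 ⟨s, hs, by omega⟩)
end

section
/- Let B = {b₁,…,b_N} ⊆ ℤ^m be a finite set whose convex hull Δ(B) is m-dimensional, set a_i = (b_i,1) ∈ ℤ^{m+1}, and let C(A) be the cone of nonnegative real linear combinations of a₁,…,a_N. Let k be the minimal positive integer such that kΔ(B) contains an interior lattice point, let u ∈ ℤ^m be an interior lattice point of kΔ(B), and set u⁽⁰⁾ = (u,k) ∈ ℤ^{m+1}. If v₁,…,v_N ∈ ℝ_{≥0} satisfy Σ_{i=1}^N v_i a_i = u⁽⁰⁾, then v_i ≤ 1 for all i. -/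
open Pointwise

/-- If k is minimal with kΔ(B) containing an interior lattice
point u, and v₁,…,v_N ≥ 0 satisfy Σ vᵢ aᵢ = (u,k), then all vᵢ ≤ 1. -/
theorem stmt_3 (m N : ℕ) (hm : 0 < m) (hN : 0 < N)
    (b : Fin N → Fin m → ℤ)
    (Δ : Set (Fin m → ℝ))
    (hΔ : Δ = convexHull ℝ (Set.range fun i : Fin N => fun j => (b i j : ℝ)))
    (hdim : affineSpan ℝ (Set.range fun i : Fin N => fun j => (b i j : ℝ)) = ⊤)
    (a : Fin N → Fin (m + 1) → ℝ)
    (ha : ∀ i, a i = Fin.snoc (fun j => (b i j : ℝ)) 1)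
    (k : ℕ) (hk : 0 < k)
    (u : Fin m → ℤ)
    (hu : (fun j => (u j : ℝ)) ∈ interior ((k : ℝ) • Δ))
    (hkmin : ∀ k' : ℕ, 0 < k' → k' < k →
      ¬ ∃ w : Fin m → ℤ, (fun j => (w j : ℝ)) ∈ interior ((k' : ℝ) • Δ))
    (v : Fin N → ℝ) (hv : ∀ i, 0 ≤ v i)
    (hva : ∑ i, v i • a i = Fin.snoc (fun j => (u j : ℝ)) (k : ℝ)) :
    ∀ i, v i ≤ 1 := by
  intro i0
  by_contra hvi
  push_neg at hvi
  set B : Fin N → Fin m → ℝ := fun i j => (b i j : ℝ) with hBdef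
  set U : Fin m → ℝ := fun j => (u j : ℝ) with hUdef
  have hsum : ∑ i, v i = (k : ℝ) := by
    have h := congrFun hva (Fin.last m)
    simp only [Finset.sum_apply, Pi.smul_apply, smul_eq_mul, ha, Fin.snoc_last,
      mul_one] at h
    exact h
  have hub : ∑ i, v i • B i = U := by
    funext j
    have h := congrFun hva (Fin.castSucc j)
    simp only [Finset.sum_apply, Pi.smul_apply, smul_eq_mul, ha,
      Fin.snoc_castSucc] at h
    simpa [B, U, Finset.sum_apply] using h
  have hVk : v i0 ≤ (k : ℝ) :=
    hsum ▸ Finset.single_le_sum (fun i _ => hv i) (Finset.mem_univ i0)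
  have hk1R : (1 : ℝ) < (k : ℝ) := lt_of_lt_of_le hvi hVk
  have hk2 : 2 ≤ k := by exact_mod_cast hk1R
  have hkne : (k : ℝ) ≠ 0 := by positivity
  have hk1ne : (k : ℝ) - 1 ≠ 0 := sub_ne_zero.mpr hk1R.ne'
  have hΔconv : Convex ℝ Δ := hΔ ▸ convex_convexHull ℝ _
  rw [interior_smul₀ hkne] at hu
  obtain ⟨q, hqint, hqU0⟩ := hu
  have hqU : (k:ℝ) • q = U := hqU0
  have hp : ((k:ℝ)-1)⁻¹ • (U - B i0) ∈ interior Δ := by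
    rcases eq_or_lt_of_le hVk with hVeq | hVlt
    · -- v i0 = k: all other coefficients vanish, so U = k • B i0 and q = B i0
      have hzero : ∀ i ∈ Finset.univ.erase i0, v i = 0 := by
        have herase : ∑ i ∈ Finset.univ.erase i0, v i = 0 := by
          have h := Finset.add_sum_erase Finset.univ v (Finset.mem_univ i0)
          rw [hsum] at h
          linarith [hVeq]
        intro i hi
        exact (Finset.sum_eq_zero_iff_of_nonneg (fun j _ => hv j)).mp herase i hi
      have hUB : U = (k:ℝ) • B i0 := by
        rw [← hub, ← Finset.add_sum_erase Finset.univ _ (Finset.mem_univ i0),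
          Finset.sum_eq_zero (fun i hi => by rw [hzero i hi, zero_smul]),
          add_zero, hVeq]
      have hqB : q = B i0 := by
        apply smul_right_injective (Fin m → ℝ) hkne
        show (k:ℝ) • q = (k:ℝ) • B i0
        rw [hqU, hUB]
      have hUB' : U - B i0 = ((k:ℝ)-1) • B i0 := by
        rw [hUB]; funext j; simp only [Pi.sub_apply, Pi.smul_apply, smul_eq_mul]; ring
      rw [hUB', inv_smul_smul₀ hk1ne, ← hqB]
      exact hqint
    · -- v i0 < k
      set V := v i0 with hVdef
      have hVpos : 0 < V := lt_trans one_pos hvi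
      have hkVpos : 0 < (k:ℝ) - V := by linarith
      set w' : Fin N → ℝ := fun i => if i = i0 then 0 else v i with hw'def
      have hw'sum : ∑ i, w' i = (k:ℝ) - V := by
        rw [← hsum, ← Finset.add_sum_erase Finset.univ v (Finset.mem_univ i0),
          ← Finset.add_sum_erase Finset.univ w' (Finset.mem_univ i0)]
        have : ∑ i ∈ Finset.univ.erase i0, w' i = ∑ i ∈ Finset.univ.erase i0, v i :=
          Finset.sum_congr rfl fun i hi => by
            simp [w', Finset.ne_of_mem_erase hi]
        rw [this]
        simp [w', hVdef]
      have hw'vec : ∑ i, w' i • B i = U - V • B i0 := by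
        rw [← hub, ← Finset.add_sum_erase Finset.univ (fun i => v i • B i)
          (Finset.mem_univ i0), ← Finset.add_sum_erase Finset.univ (fun i => w' i • B i)
          (Finset.mem_univ i0)]
        have : ∑ i ∈ Finset.univ.erase i0, w' i • B i
            = ∑ i ∈ Finset.univ.erase i0, v i • B i :=
          Finset.sum_congr rfl fun i hi => by
            simp [w', Finset.ne_of_mem_erase hi]
        rw [this]
        simp [w', hVdef]
      have hz : ((k:ℝ) - V)⁻¹ • (U - V • B i0) ∈ Δ := by
        rw [hΔ]
        have hmem := Finset.centerMass_mem_convexHull (Finset.univ (α := Fin N))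
          (w := w') (fun i _ => by by_cases h : i = i0 <;> simp [w', h, hv i])
          (by rw [hw'sum]; exact hkVpos)
          (z := B) (fun i _ => Set.mem_range_self i)
        rwa [Finset.centerMass, hw'sum, hw'vec] at hmem
      set ta : ℝ := (V - 1) * k / (V * ((k:ℝ)-1)) with htadef
      set tb : ℝ := ((k:ℝ) - V) / (V * ((k:ℝ)-1)) with htbdef
      have hta : 0 < ta := by
        apply div_pos
        · apply mul_pos <;> linarith
        · apply mul_pos <;> linarith
      have htb : 0 ≤ tb := by
        apply div_nonneg
        · linarith
        · nlinarith
      have htab : ta + tb = 1 := by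
        rw [htadef, htbdef, ← add_div, div_eq_one_iff_eq (by nlinarith)]
        ring
      have hcombo := hΔconv.combo_interior_self_mem_interior hqint hz hta htb htab
      have hq' : q = (k:ℝ)⁻¹ • U := by rw [← hqU, inv_smul_smul₀ hkne]
      have heq : ta • q + tb • (((k:ℝ) - V)⁻¹ • (U - V • B i0))
          = ((k:ℝ)-1)⁻¹ • (U - B i0) := by
        rw [hq']
        funext j
        simp only [Pi.add_apply, Pi.smul_apply, Pi.sub_apply, smul_eq_mul, htadef, htbdef]
        have hVne : V ≠ 0 := hVpos.ne'
        have hkVne : ((k:ℝ) - V) ≠ 0 := hkVpos.ne'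
        field_simp
        ring
      rwa [heq] at hcombo
  refine hkmin (k - 1) (by omega) (by omega) ⟨fun j => u j - b i0 j, ?_⟩
  have hcast : ((k - 1 : ℕ) : ℝ) = (k:ℝ) - 1 := by
    rw [Nat.cast_sub (by omega : 1 ≤ k)]; norm_num
  rw [hcast, interior_smul₀ hk1ne]
  refine ⟨_, hp, ?_⟩
  show ((k:ℝ)-1) • (((k:ℝ)-1)⁻¹ • (U - B i0)) = _
  rw [smul_inv_smul₀ hk1ne]
  funext j
  push_cast
  simp [U, B]
end

section
/- Let m = 2n+1 and let B = {b₁,…,b_N} ⊆ ℤ^m have m-dimensional convex hull Δ(B); set a_i = (b_i,1) ∈ ℤ^{m+1} and let C(A) be the cone of nonnegative real combinations of the a_i. Suppose nΔ(B) contains no interior lattice points, u is an interior lattice point of (n+1)Δ(B), and u⁽⁰⁾ = (u,n+1). Let p be a prime and let v₁,…,v_{2n+2} ∈ ℚ be p-integral with −1 < v_i ≤ 0 and Σ_{i=1}^{2n+2} v_i a_i = −u⁽⁰⁾. For each i let v′_i be the unique p-integral rational number with −1 < v′_i ≤ 0 and pv′_i − v_i ∈ ℤ. Then −Σ_{i=1}^{2n+2}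 v′_i a_i lies in ℤ^{2n+2}, is an interior lattice point of C(A), and its last coordinate equals n+1. -/
open Pointwise

lemma den_sum_dvd {ι : Type*} (s : Finset ι) (f : ι → ℚ) :
    (∑ i ∈ s, f i).den ∣ ∏ i ∈ s, (f i).den := by
  classical
  induction s using Finset.induction with
  | empty => simp
  | @insert _ _ h ih =>
    rw [Finset.sum_insert h, Finset.prod_insert h]
    exact (Rat.add_den_dvd _ _).trans (mul_dvd_mul_left _ ih)

lemma exists_int_of_p (p : ℕ) (hp : p.Prime) (q : ℚ) (hden : ¬ (p ∣ q.den))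
    (w : ℤ) (h : (p : ℚ) * q = w) : ∃ z : ℤ, q = z := by
  have hp0 : (p : ℚ) ≠ 0 := by exact_mod_cast hp.ne_zero
  have hq : q = ((w : ℚ) / (p : ℚ)) := by field_simp [hp0]; linarith [h]
  have hq2 : q = Rat.divInt w (p : ℤ) := by rw [Rat.divInt_eq_div]; push_cast; exact hq
  have hdvd : (q.den : ℤ) ∣ (p : ℤ) := by rw [hq2]; exact Rat.den_dvd w p
  have hdvd' : q.den ∣ p := Int.ofNat_dvd.mp hdvd
  rcases (Nat.Prime.eq_one_or_self_of_dvd hp _ hdvd') with h1 | h1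
  · exact ⟨q.num, (Rat.den_eq_one_iff q).mp h1 |>.symm⟩
  · exact absurd (h1 ▸ dvd_refl _) hden

/-- the Frobenius-transformed point −Σ v′ᵢaᵢ is an interior
lattice point of C(A) with last coordinate n+1. -/
theorem stmt_5 (n m N : ℕ) (hm : m = 2 * n + 1)
    (b : Fin N → Fin m → ℤ)
    (Δ : Set (Fin m → ℝ))
    (hΔ : Δ = convexHull ℝ (Set.range fun i : Fin N => fun j => (b i j : ℝ)))
    (hdim : affineSpan ℝ (Set.range fun i : Fin N => fun j => (b i j : ℝ)) = ⊤)
    (a : Fin N → Fin (m + 1) → ℚ)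
    (ha : ∀ i, a i = Fin.snoc (fun j => (b i j : ℚ)) 1)
    (C : Set (Fin (m + 1) → ℝ))
    (hC : C = {x | ∃ w : Fin N → ℝ, (∀ i, 0 ≤ w i) ∧
      x = ∑ i, w i • fun j => ((a i j : ℚ) : ℝ)})
    (hnoint : ¬ ∃ x : Fin m → ℤ, (fun i => (x i : ℝ)) ∈ interior ((n : ℝ) • Δ))
    (u : Fin m → ℤ)
    (hu : (fun j => (u j : ℝ)) ∈ interior (((n : ℝ) + 1) • Δ))
    (hN : 2 * n + 2 ≤ N)
    (p : ℕ) (hp : p.Prime)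
    (v : Fin (2 * n + 2) → ℚ)
    (hvint : ∀ i, ¬ (p ∣ (v i).den))
    (hv1 : ∀ i, -1 < v i ∧ v i ≤ 0)
    (hveq : ∑ i, v i • a (Fin.castLE hN i) =
      -(Fin.snoc (fun j => (u j : ℚ)) ((n : ℚ) + 1)))
    (v' : Fin (2 * n + 2) → ℚ)
    (hv'int : ∀ i, ¬ (p ∣ (v' i).den))
    (hv'1 : ∀ i, -1 < v' i ∧ v' i ≤ 0)
    (hv'v : ∀ i, ∃ z : ℤ, (p : ℚ) * v' i - v i = z) :
    (∀ j : Fin (m + 1), ∃ z : ℤ, (-(∑ i, v' i • a (Fin.castLE hN i))) j = z) ∧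
      (fun j => (((-(∑ i, v' i • a (Fin.castLE hN i))) j : ℚ) : ℝ)) ∈ interior C ∧
      (-(∑ i, v' i • a (Fin.castLE hN i))) (Fin.last m) = (n : ℚ) + 1 := by
  classical
  -- basic setup
  set S : Fin (m + 1) → ℚ := ∑ i, v' i • a (Fin.castLE hN i) with hSdef
  set u0 : Fin (m + 1) → ℚ := Fin.snoc (fun j => (u j : ℚ)) ((n : ℚ) + 1) with hu0def
  choose z hz using hv'v
  choose c hc using (fun i j => show ∃ w : ℤ, a i j = (w : ℚ) by
    rw [ha i]
    refine Fin.lastCases ?_ ?_ j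
    · exact ⟨1, by simp⟩
    · intro j; exact ⟨b i j, by simp⟩)
  have halast : ∀ i, a i (Fin.last m) = 1 := by intro i; rw [ha i]; simp
  have hacast : ∀ i (j : Fin m), a i (Fin.castSucc j) = ((b i j : ℤ) : ℚ) := by
    intro i j; rw [ha i]; simp
  have hp0 : (0 : ℝ) < p := by exact_mod_cast hp.pos
  have hpQ0 : ((p : ℚ)) ≠ 0 := by exact_mod_cast hp.ne_zero
  -- real-side objects
  set bR : Fin N → Fin m → ℝ := fun i => fun j => (b i j : ℝ) with hbRdef
  set fR : Fin N → Fin (m + 1) → ℝ := fun i => fun j => ((a i j : ℚ) : ℝ) with hfRdef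
  have hbR : ∀ i j, bR i j = (b i j : ℝ) := fun i j => rfl
  have hΔ' : Δ = convexHull ℝ (Set.range bR) := hΔ
  have hCrep : ∀ x : Fin (m + 1) → ℝ, x ∈ C ↔ ∃ w : Fin N → ℝ, (∀ i, 0 ≤ w i) ∧
      x = ∑ i, w i • fR i := by intro x; rw [hC]; exact Iff.rfl
  have hf1 : ∀ i, fR i (Fin.last m) = 1 := by
    intro i; rw [hfRdef]; simp only [halast i]; norm_num
  have hfa : ∀ i (j : Fin m), fR i (Fin.castSucc j) = bR i j := by
    intro i j; rw [hfRdef]; simp only [hacast i j]; push_cast; rfl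
  have hfRapp : ∀ i j, fR i j = ((a i j : ℚ) : ℝ) := fun i j => rfl
  have hNpos : 0 < N := lt_of_lt_of_le (by omega) hN
  have hne : Nonempty (Fin (2 * n + 2)) := ⟨⟨0, by omega⟩⟩
  -- ======== cone lemmas ========
  have hsum_ext : ∀ (g : Fin N → (Fin (m + 1) → ℝ)), (∀ j : Fin N, 2 * n + 2 ≤ (j : ℕ) → g j = 0) →
      ∑ j, g j = ∑ i : Fin (2 * n + 2), g (Fin.castLE hN i) := by
    intro g hg
    have h1 : ∑ i : Fin (2 * n + 2), g (Fin.castLE hN i)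
        = ∑ j ∈ Finset.univ.map (Fin.castLEEmb hN), g j := by
      rw [Finset.sum_map]; simp
    rw [h1]
    refine (Finset.sum_subset (Finset.subset_univ _) ?_).symm
    intro j _ hj
    apply hg
    by_contra hlt
    push_neg at hlt
    exact hj (Finset.mem_map.mpr ⟨⟨j.1, hlt⟩, Finset.mem_univ _, by ext; simp⟩)
  have hmemC : ∀ w : Fin (2 * n + 2) → ℝ, (∀ i, 0 ≤ w i) →
      (∑ i, w i • fR (Fin.castLE hN i)) ∈ C := by
    intro w hw
    rw [hCrep]
    refine ⟨fun j => if h : (j : ℕ) < 2 * n + 2 then w ⟨j.1, h⟩ else 0, ?_, ?_⟩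
    · intro i; dsimp only; split
      · apply hw
      · exact le_refl 0
    · have hzero : ∀ j : Fin N, 2 * n + 2 ≤ (j : ℕ) →
          (if h : (j : ℕ) < 2 * n + 2 then w ⟨j.1, h⟩ else 0) • fR j = 0 := by
        intro j hj; rw [dif_neg (by omega)]; simp
      refine ((hsum_ext _ hzero).trans ?_).symm
      apply Finset.sum_congr rfl
      intro i _
      rw [dif_pos (by simp only [Fin.coe_castLE]; exact i.2)]
      rfl
  have hCadd : ∀ x ∈ C, ∀ y ∈ C, x + y ∈ C := by
    intro x hx y hy
    rw [hCrep] at *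
    obtain ⟨w1, hw1, rfl⟩ := hx
    obtain ⟨w2, hw2, rfl⟩ := hy
    exact ⟨w1 + w2, fun i => add_nonneg (hw1 i) (hw2 i), by
      rw [← Finset.sum_add_distrib]; apply Finset.sum_congr rfl; intros; rw [Pi.add_apply, add_smul]⟩
  have hCsmul : ∀ (t : ℝ), 0 ≤ t → ∀ x ∈ C, t • x ∈ C := by
    intro t ht x hx
    rw [hCrep] at *
    obtain ⟨w, hw, rfl⟩ := hx
    exact ⟨fun i => t * w i, fun i => mul_nonneg ht (hw i), by
      rw [Finset.smul_sum]; apply Finset.sum_congr rfl; intros; rw [smul_smul]⟩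
  have hintadd : ∀ x ∈ interior C, ∀ y ∈ C, x + y ∈ interior C := by
    intro x hx y hy
    have h1 : x + y ∈ interior C + {y} := Set.add_mem_add hx rfl
    have h2 : interior C + {y} ⊆ interior (C + {y}) := subset_interior_add_left
    have h3 : C + {y} ⊆ C := by
      rw [Set.add_singleton]
      rintro _ ⟨c', hc', rfl⟩
      exact hCadd c' hc' y hy
    exact interior_mono h3 (h2 h1)
  have hintsmul : ∀ (t : ℝ), 0 < t → ∀ x ∈ interior C, t • x ∈ interior C := by
    intro t ht x hx
    have h1 : t • x ∈ t • interior C := Set.smul_mem_smul_set hx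
    rw [← interior_smul₀ (ne_of_gt ht)] at h1
    exact interior_mono (by rintro y ⟨x', hx', rfl⟩; exact hCsmul t ht.le x' hx') h1
  -- ======== slice lemmas ========
  have hlast_nonneg : ∀ x ∈ C, 0 ≤ x (Fin.last m) := by
    intro x hx
    obtain ⟨w, hw, rfl⟩ := (hCrep x).mp hx
    rw [Finset.sum_apply]
    apply Finset.sum_nonneg
    intro i _
    rw [Pi.smul_apply, hf1 i, smul_eq_mul, mul_one]
    exact hw i
  have hxlast : ∀ (w : Fin N → ℝ), (∑ i, w i • fR i) (Fin.last m) = ∑ i, w i := by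
    intro w
    rw [Finset.sum_apply]
    apply Finset.sum_congr rfl
    intro i _
    rw [Pi.smul_apply, hf1 i, smul_eq_mul, mul_one]
  have hxcast : ∀ (w : Fin N → ℝ),
      (fun j : Fin m => (∑ i, w i • fR i) (Fin.castSucc j)) = ∑ i, w i • bR i := by
    intro w
    funext j
    rw [Finset.sum_apply, Finset.sum_apply]
    apply Finset.sum_congr rfl
    intro i _
    rw [Pi.smul_apply, Pi.smul_apply, hfa i j]
  have hsliceC : ∀ x ∈ C, 0 < x (Fin.last m) →
      (fun j : Fin m => x (Fin.castSucc j)) ∈ (x (Fin.last m)) • Δ := by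
    intro x hx hpos
    obtain ⟨w, hw, rfl⟩ := (hCrep x).mp hx
    rw [hxlast] at hpos ⊢
    have hsum : 0 < ∑ i, w i := hpos
    refine ⟨Finset.univ.centerMass w bR, ?_, ?_⟩
    · rw [hΔ']
      exact Finset.centerMass_mem_convexHull _ (fun i _ => hw i) hsum
        (fun i _ => Set.mem_range_self i)
    · rw [Finset.centerMass]
      dsimp only
      rw [smul_smul, mul_inv_cancel₀ (ne_of_gt hsum), one_smul]
      exact (hxcast w).symm
  have hsnocC : ∀ y ∈ Δ, ∀ t : ℝ, 0 ≤ t → Fin.snoc (t • y) t ∈ C := by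
    have hsub : Δ ⊆ {y' : Fin m → ℝ | ∀ t : ℝ, 0 ≤ t → Fin.snoc (t • y') t ∈ C} := by
      rw [hΔ']
      apply convexHull_min
      · rintro _ ⟨i, rfl⟩ t ht
        have he : Fin.snoc (t • bR i) t = t • fR i := by
          funext j
          induction j using Fin.lastCases with
          | last => rw [Fin.snoc_last, Pi.smul_apply, hf1 i, smul_eq_mul, mul_one]
          | cast j => rw [Fin.snoc_castSucc, Pi.smul_apply, Pi.smul_apply, hfa i j]
        show Fin.snoc (t • bR i) t ∈ C
        rw [he]
        apply hCsmul t ht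
        rw [hCrep]
        refine ⟨fun j => if j = i then 1 else 0, fun j => by positivity, ?_⟩
        symm
        rw [Finset.sum_eq_single i]
        · simp
        · intro j _ hj; simp [hj]
        · intro h; exact absurd (Finset.mem_univ i) h
      · intro y₁ hy₁ y₂ hy₂ α β hα hβ hαβ
        intro t ht
        have he : Fin.snoc (t • (α • y₁ + β • y₂)) t
            = α • (Fin.snoc (t • y₁) t : Fin (m+1) → ℝ)
              + β • (Fin.snoc (t • y₂) t : Fin (m+1) → ℝ) := by
          funext j
          induction j using Fin.lastCases with
          | last => simp only [Fin.snoc_last, Pi.add_apply, Pi.smul_apply, Fin.snoc_last,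
              smul_eq_mul]; nlinarith
          | cast j => simp only [Fin.snoc_castSucc, Pi.add_apply, Pi.smul_apply,
              Fin.snoc_castSucc, smul_eq_mul]; ring
        show Fin.snoc (t • (α • y₁ + β • y₂)) t ∈ C
        rw [he]
        exact hCadd _ (hCsmul α hα _ (hy₁ t ht)) _ (hCsmul β hβ _ (hy₂ t ht))
    intro y hy
    exact hsub hy
  have hu0R_int : (Fin.snoc (fun j => (u j : ℝ)) ((n : ℝ) + 1)) ∈ interior C := by
    set T : Set (Fin (m+1) → ℝ) := {x | 0 < x (Fin.last m)} with hT
    have hTopen : IsOpen T := isOpen_lt continuous_const (continuous_apply _)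
    set F : (Fin (m+1) → ℝ) → (Fin m → ℝ) :=
      fun x => (x (Fin.last m))⁻¹ • (fun j : Fin m => x (Fin.castSucc j)) with hF
    have hFcont : ContinuousOn F T := by
      refine ContinuousOn.smul (f := fun x : Fin (m+1) → ℝ => (x (Fin.last m))⁻¹)
        (g := fun x : Fin (m+1) → ℝ => fun j : Fin m => x (Fin.castSucc j)) ?_ ?_
      · exact ((continuous_apply (Fin.last m)).continuousOn).inv₀ (fun x hx => ne_of_gt hx)
      · exact (continuous_pi fun j => continuous_apply _).continuousOn
    have hUopen : IsOpen (T ∩ F ⁻¹' (interior Δ)) :=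
      hFcont.isOpen_inter_preimage hTopen isOpen_interior
    have hUsub : T ∩ F ⁻¹' (interior Δ) ⊆ C := by
      rintro x ⟨hx1, hx2⟩
      have hFx : F x ∈ Δ := interior_subset hx2
      have hmm := hsnocC (F x) hFx (x (Fin.last m)) (le_of_lt hx1)
      have hxx : x (Fin.last m) • F x = fun j : Fin m => x (Fin.castSucc j) := by
        rw [hF]; exact smul_inv_smul₀ (ne_of_gt hx1) _
      rw [hxx] at hmm
      have hsx : Fin.snoc (fun j : Fin m => x (Fin.castSucc j)) (x (Fin.last m)) = x := by
        funext j
        induction j using Fin.lastCases with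
        | last => rw [Fin.snoc_last]
        | cast j => rw [Fin.snoc_castSucc]
      rwa [hsx] at hmm
    have hmem : (Fin.snoc (fun j => (u j : ℝ)) ((n : ℝ) + 1)) ∈ T ∩ F ⁻¹' (interior Δ) := by
      have hne' : ((n : ℝ) + 1) ≠ 0 := by positivity
      constructor
      · have h0 : (Fin.snoc (fun j => (u j : ℝ)) ((n : ℝ) + 1) : Fin (m+1) → ℝ) (Fin.last m)
            = (n:ℝ)+1 := Fin.snoc_last _ _
        show 0 < (Fin.snoc (fun j => (u j : ℝ)) ((n : ℝ) + 1) : Fin (m+1) → ℝ) (Fin.last m)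
        rw [h0]; positivity
      · show F (Fin.snoc (fun j => (u j : ℝ)) ((n : ℝ) + 1)) ∈ interior Δ
        rw [interior_smul₀ hne'] at hu
        obtain ⟨y₀, hy₀, hy₀eq⟩ := hu
        have hy₀eq' : ((n:ℝ)+1) • y₀ = fun j => (u j : ℝ) := hy₀eq
        have h1 : F (Fin.snoc (fun j => (u j : ℝ)) ((n : ℝ) + 1))
            = ((n:ℝ)+1)⁻¹ • (fun j => (u j : ℝ)) := by
          rw [hF]
          dsimp only
          congr 1
          · rw [Fin.snoc_last]
          · funext j; exact Fin.snoc_castSucc _ _ _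
        rw [h1, ← hy₀eq', inv_smul_smul₀ hne']
        exact hy₀
    exact interior_maximal hUsub hUopen hmem
  have hslice_int : ∀ x ∈ interior C, 0 < x (Fin.last m) →
      (fun j : Fin m => x (Fin.castSucc j)) ∈ interior ((x (Fin.last m)) • Δ) := by
    intro x hx hpos
    set t := x (Fin.last m) with htdef
    set g : (Fin m → ℝ) → (Fin (m+1) → ℝ) := fun y => Fin.snoc y t with hg
    have hgcont : Continuous g := by
      apply continuous_pi
      intro j
      induction j using Fin.lastCases with
      | last => simp only [hg, Fin.snoc_last]; exact continuous_const
      | cast j => simp only [hg, Fin.snoc_castSucc]; exact continuous_apply _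
    have hgx : g (fun j : Fin m => x (Fin.castSucc j)) = x := by
      funext j
      induction j using Fin.lastCases with
      | last => rw [hg]; simp only [Fin.snoc_last]; rfl
      | cast j => rw [hg]; simp only [Fin.snoc_castSucc]
    have hVopen : IsOpen (g ⁻¹' (interior C)) := isOpen_interior.preimage hgcont
    have hVsub : g ⁻¹' (interior C) ⊆ t • Δ := by
      intro y hy
      have h1 : g y ∈ C := interior_subset hy
      have h2 : (g y) (Fin.last m) = t := by rw [hg]; simp only [Fin.snoc_last]
      have h4 := hsliceC (g y) h1 (by rw [h2]; exact hpos)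
      rw [h2] at h4
      have h3 : (fun j : Fin m => (g y) (Fin.castSucc j)) = y := by
        funext j; rw [hg]; simp only [Fin.snoc_castSucc]
      rwa [h3] at h4
    exact interior_maximal hVsub hVopen (by rw [Set.mem_preimage, hgx]; exact hx)
  have hpos_last : ∀ x ∈ interior C, 0 < x (Fin.last m) := by
    intro x hx
    rcases lt_or_eq_of_le (hlast_nonneg x (interior_subset hx)) with h | h
    · exact h
    · exfalso
      obtain ⟨ε, hε, hball⟩ := Metric.isOpen_iff.mp isOpen_interior x hx
      set y : Fin (m+1) → ℝ := Function.update x (Fin.last m) (-(ε/2)) with hy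
      have hymem : y ∈ Metric.ball x ε := by
        rw [Metric.mem_ball]
        rw [dist_pi_lt_iff hε]
        intro j
        by_cases hj : j = Fin.last m
        · subst hj
          rw [hy, Function.update_self, Real.dist_eq, ← h]
          simp only [sub_zero, abs_neg]
          rw [abs_of_nonneg (by positivity)]
          linarith
        · rw [hy, Function.update_of_ne hj, dist_self]; exact hε
      have h5 : y ∈ C := interior_subset (hball hymem)
      have h6 := hlast_nonneg y h5
      rw [hy, Function.update_self] at h6
      linarith
  have hheight : ∀ (x : Fin m → ℤ) (h : ℤ),
      (Fin.snoc (fun j : Fin m => (x j : ℝ)) (h : ℝ)) ∈ interior C → (n : ℤ) + 1 ≤ h := by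
    intro x h hx
    set pt : Fin (m+1) → ℝ := Fin.snoc (fun j : Fin m => (x j : ℝ)) (h : ℝ) with hpt
    have hlast : pt (Fin.last m) = (h : ℝ) := by rw [hpt]; simp only [Fin.snoc_last]
    have hhpos : (0:ℝ) < h := by rw [← hlast]; exact hpos_last pt hx
    have hhpos' : 0 < h := by exact_mod_cast hhpos
    by_contra hcon
    push_neg at hcon
    have hhn : h ≤ (n : ℤ) := by omega
    have hxi : (fun j : Fin m => pt (Fin.castSucc j)) ∈ interior ((pt (Fin.last m)) • Δ) :=
      hslice_int pt hx (by rw [hlast]; exact hhpos)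
    rw [hlast] at hxi
    have hxc : (fun j : Fin m => pt (Fin.castSucc j)) = fun j => (x j : ℝ) := by
      funext j; rw [hpt]; simp only [Fin.snoc_castSucc]
    rw [hxc] at hxi
    have hΔconv : Convex ℝ Δ := hΔ' ▸ convex_convexHull ℝ _
    set i0 : Fin N := ⟨0, hNpos⟩ with hi0
    have hb0 : bR i0 ∈ Δ := hΔ' ▸ subset_convexHull ℝ _ (Set.mem_range_self i0)
    have hkey : (fun j => (x j : ℝ)) + ((n : ℝ) - (h : ℝ)) • bR i0 ∈ interior ((n : ℝ) • Δ) := by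
      have h1 : (fun j => (x j : ℝ)) + ((n : ℝ) - (h : ℝ)) • bR i0
          ∈ interior ((h : ℝ) • Δ) + ({((n : ℝ) - (h : ℝ)) • bR i0} : Set (Fin m → ℝ)) :=
        Set.add_mem_add hxi rfl
      have h2 : interior ((h : ℝ) • Δ) + ({((n : ℝ) - (h : ℝ)) • bR i0} : Set (Fin m → ℝ))
          ⊆ interior ((h : ℝ) • Δ + ({((n : ℝ) - (h : ℝ)) • bR i0} : Set (Fin m → ℝ))) :=
        subset_interior_add_left
      have h3 : (h : ℝ) • Δ + ({((n : ℝ) - (h : ℝ)) • bR i0} : Set (Fin m → ℝ))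
          ⊆ (h : ℝ) • Δ + ((n : ℝ) - (h : ℝ)) • Δ := by
        apply Set.add_subset_add_left
        rintro _ rfl
        exact Set.smul_mem_smul_set hb0
      have h4 : (h : ℝ) • Δ + ((n : ℝ) - (h : ℝ)) • Δ = (n : ℝ) • Δ := by
        rw [← hΔconv.add_smul (by exact_mod_cast hhpos'.le) (by
          have : (h:ℝ) ≤ (n:ℝ) := by exact_mod_cast hhn
          linarith)]
        norm_num
      exact interior_mono (h4 ▸ h3) (h2 h1)
    apply hnoint
    refine ⟨fun j => x j + (n - h) * b i0 j, ?_⟩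
    have heq : (fun j : Fin m => ((x j + (n - h) * b i0 j : ℤ) : ℝ))
        = (fun j => (x j : ℝ)) + ((n : ℝ) - (h : ℝ)) • bR i0 := by
      funext j
      rw [Pi.add_apply, Pi.smul_apply, hbR i0 j, smul_eq_mul]
      push_cast
      ring
    rw [heq]; exact hkey
  -- ======== rational arithmetic ========
  have hzneg : ∀ i, z i ≤ 0 := by
    intro i
    have h1 : (z i : ℚ) < 1 := by
      rw [← hz i]
      have h2 : (p : ℚ) * v' i ≤ 0 :=
        mul_nonpos_iff.mpr (Or.inl ⟨by positivity, (hv'1 i).2⟩)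
      have := (hv1 i).1
      linarith
    have h2 : z i < 1 := by exact_mod_cast h1
    omega
  have hpS : (p : ℚ) • S = -u0 + ∑ i, ((z i : ℚ)) • a (Fin.castLE hN i) := by
    calc (p : ℚ) • S = ∑ i, ((p : ℚ) * v' i) • a (Fin.castLE hN i) := by
          rw [hSdef, Finset.smul_sum]
          apply Finset.sum_congr rfl
          intros i _
          rw [smul_smul]
      _ = ∑ i, (v i + (z i : ℚ)) • a (Fin.castLE hN i) := by
          apply Finset.sum_congr rfl
          intros i _
          congr 1
          have := hz i
          linarith
      _ = (∑ i, v i • a (Fin.castLE hN i)) + ∑ i, ((z i : ℚ)) • a (Fin.castLE hN i) := by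
          rw [← Finset.sum_add_distrib]
          apply Finset.sum_congr rfl
          intros i _
          rw [add_smul]
      _ = -u0 + ∑ i, ((z i : ℚ)) • a (Fin.castLE hN i) := by rw [hveq]
  have hu0int : ∀ j, ∃ w : ℤ, u0 j = (w : ℚ) := by
    intro j
    rw [hu0def]
    refine Fin.lastCases ?_ ?_ j
    · exact ⟨n + 1, by rw [Fin.snoc_last]; push_cast; ring⟩
    · intro j; exact ⟨u j, by rw [Fin.snoc_castSucc]⟩
  choose U0 hU0 using hu0int
  have hSapp : ∀ j, S j = ∑ i, v' i * a (Fin.castLE hN i) j := by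
    intro j
    rw [hSdef, Finset.sum_apply]
    apply Finset.sum_congr rfl
    intros i _
    rw [Pi.smul_apply, smul_eq_mul]
  have hWex : ∃ W : Fin (m + 1) → ℤ, ∀ j, (-S) j = (W j : ℚ) := by
    have hint : ∀ j, ∃ w : ℤ, S j = (w : ℚ) := by
      intro j
      apply exists_int_of_p p hp _ ?_ (-(U0 j) + ∑ i, z i * c (Fin.castLE hN i) j) ?_
      · intro hdvd
        have h1 : (S j).den ∣ ∏ i, (v' i * a (Fin.castLE hN i) j).den := by
          rw [hSapp j]; exact den_sum_dvd _ _
        have h2 : ∏ i : Fin (2*n+2), (v' i * a (Fin.castLE hN i) j).den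
            ∣ ∏ i : Fin (2*n+2), (v' i).den := by
          apply Finset.prod_dvd_prod_of_dvd
          intro i _
          rw [hc (Fin.castLE hN i) j]
          have := Rat.mul_den_dvd (v' i) ((c (Fin.castLE hN i) j : ℤ) : ℚ)
          rwa [Rat.den_intCast, mul_one] at this
        have h3 : (p : ℕ) ∣ ∏ i : Fin (2*n+2), (v' i).den := dvd_trans hdvd (h1.trans h2)
        obtain ⟨i, _, hi⟩ := (Nat.Prime.prime hp).exists_mem_finset_dvd h3
        exact hv'int i hi
      · have hps := congrFun hpS j
        rw [Pi.smul_apply, smul_eq_mul, Pi.add_apply, Pi.neg_apply, Finset.sum_apply] at hps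
        rw [hps, hU0 j]
        simp only [Pi.smul_apply, smul_eq_mul]
        push_cast [hc]
        ring
    choose W' hW' using hint
    exact ⟨fun j => -(W' j), fun j => by rw [Pi.neg_apply, hW' j]; push_cast; ring⟩
  obtain ⟨W, hW⟩ := hWex
  -- ======== interiority of -S ========
  have hu0R_eq : (fun j => ((u0 j : ℚ) : ℝ)) = Fin.snoc (fun j => (u j : ℝ)) ((n : ℝ) + 1) := by
    funext j
    rw [hu0def]
    induction j using Fin.lastCases with
    | last => rw [Fin.snoc_last, Fin.snoc_last]; push_cast; ring
    | cast j => rw [Fin.snoc_castSucc, Fin.snoc_castSucc]; push_cast; rfl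
  have hu0R_int' : (fun j => ((u0 j : ℚ) : ℝ)) ∈ interior C := by rw [hu0R_eq]; exact hu0R_int
  have qkey : (-S) = (p : ℚ)⁻¹ • (u0 + ∑ i, ((-(z i) : ℤ) : ℚ) • a (Fin.castLE hN i)) := by
    have h3 : ∑ i, ((-(z i) : ℤ) : ℚ) • a (Fin.castLE hN i)
        = -∑ i, ((z i : ℚ)) • a (Fin.castLE hN i) := by
      rw [← Finset.sum_neg_distrib]
      apply Finset.sum_congr rfl
      intros i _
      rw [Int.cast_neg, neg_smul]
    have h2 : u0 + ∑ i, ((-(z i) : ℤ) : ℚ) • a (Fin.castLE hN i) = (p : ℚ) • (-S) := by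
      rw [h3, smul_neg, hpS, neg_add, neg_neg]
    rw [h2, inv_smul_smul₀ hpQ0]
  have hSR_eq : (fun j => (((-S) j : ℚ) : ℝ)) = (p : ℝ)⁻¹ •
      ((fun j => ((u0 j : ℚ) : ℝ)) + ∑ i, ((-(z i) : ℤ) : ℝ) • fR (Fin.castLE hN i)) := by
    funext j
    have hq := congrFun qkey j
    rw [Pi.smul_apply, Pi.add_apply, Finset.sum_apply, smul_eq_mul] at hq
    rw [hq]
    simp only [Pi.smul_apply, Pi.add_apply, Finset.sum_apply, smul_eq_mul, hfRapp]
    push_cast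
    ring
  have hSR_int : (fun j => (((-S) j : ℚ) : ℝ)) ∈ interior C := by
    rw [hSR_eq]
    apply hintsmul _ (by positivity)
    apply hintadd _ hu0R_int'
    apply hmemC
    intro i
    have := hzneg i
    have h1 : (0:ℤ) ≤ -(z i) := by omega
    exact_mod_cast h1
  -- ======== height of -S is ≥ n+1 ========
  have hSR_snoc : (fun j => (((-S) j : ℚ) : ℝ))
      = Fin.snoc (fun j : Fin m => ((W (Fin.castSucc j) : ℤ) : ℝ)) ((W (Fin.last m) : ℤ) : ℝ) := by
    funext j
    induction j using Fin.lastCases with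
    | last => rw [Fin.snoc_last, hW (Fin.last m)]; push_cast; rfl
    | cast j => rw [Fin.snoc_castSucc, hW (Fin.castSucc j)]; push_cast; rfl
  have hWlast_ge : (n : ℤ) + 1 ≤ W (Fin.last m) := by
    apply hheight (fun j => W (Fin.castSucc j)) (W (Fin.last m))
    rw [← hSR_snoc]
    exact hSR_int
  -- ======== the complementary point T ========
  set T : Fin (m + 1) → ℚ := ∑ i, (1 + v' i) • a (Fin.castLE hN i) with hTdef
  have hεex : ∃ ε : ℚ, 0 < ε ∧ ∀ i, ε ≤ 1 + v' i := by
    refine ⟨Finset.univ.inf' (Finset.univ_nonempty) (fun i => 1 + v' i), ?_, ?_⟩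
    · rw [Finset.lt_inf'_iff]
      intro i _
      have := (hv'1 i).1
      linarith
    · intro i
      exact Finset.inf'_le _ (Finset.mem_univ i)
  obtain ⟨ε, hεpos, hεle⟩ := hεex
  have hcoeff : ∀ i, 0 ≤ 1 + v' i + ε * v i := by
    intro i
    have h1 : ε * (-1) ≤ ε * v i := mul_le_mul_of_nonneg_left (hv1 i).1.le hεpos.le
    have := hεle i
    linarith
  have qkeyT : T = ε • u0 + ∑ i, (1 + v' i + ε * v i) • a (Fin.castLE hN i) := by
    have hu0eq : u0 = -∑ i, v i • a (Fin.castLE hN i) := by rw [hveq, neg_neg]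
    have h1 : ε • u0 = ∑ i, (-(ε * v i)) • a (Fin.castLE hN i) := by
      rw [hu0eq, smul_neg, Finset.smul_sum, ← Finset.sum_neg_distrib]
      apply Finset.sum_congr rfl
      intros i _
      rw [smul_smul, neg_smul]
    rw [h1, ← Finset.sum_add_distrib, hTdef]
    apply Finset.sum_congr rfl
    intros i _
    rw [← add_smul]
    congr 1
    ring
  have hTR_eq : (fun j => ((T j : ℚ) : ℝ)) = (ε : ℝ) • (fun j => ((u0 j : ℚ) : ℝ))
      + ∑ i, ((1 + v' i + ε * v i : ℚ) : ℝ) • fR (Fin.castLE hN i) := by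
    funext j
    have hq := congrFun qkeyT j
    rw [Pi.add_apply, Pi.smul_apply, Finset.sum_apply, smul_eq_mul] at hq
    rw [hq]
    simp only [Pi.smul_apply, Pi.add_apply, Finset.sum_apply, smul_eq_mul, hfRapp]
    push_cast
    ring
  have hTR_int : (fun j => ((T j : ℚ) : ℝ)) ∈ interior C := by
    rw [hTR_eq]
    apply hintadd _ (hintsmul (ε : ℝ) (by exact_mod_cast hεpos) _ hu0R_int')
    apply hmemC
    intro i
    exact_mod_cast hcoeff i
  -- integer coordinates of T
  set WT : Fin (m + 1) → ℤ := fun j => (∑ i, c (Fin.castLE hN i) j) - W j with hWTdef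
  have hWT : ∀ j, T j = (WT j : ℚ) := by
    intro j
    have hTj : T j = (∑ i, a (Fin.castLE hN i) j) + S j := by
      rw [hTdef, Finset.sum_apply, hSapp j, ← Finset.sum_add_distrib]
      apply Finset.sum_congr rfl
      intros i _
      rw [Pi.smul_apply, smul_eq_mul]
      ring
    have hSj : S j = -(W j : ℚ) := by
      have := hW j
      rw [Pi.neg_apply] at this
      linarith
    rw [hTj, hSj, hWTdef]
    push_cast [hc]
    ring
  have hTR_snoc : (fun j => ((T j : ℚ) : ℝ))
      = Fin.snoc (fun j : Fin m => ((WT (Fin.castSucc j) : ℤ) : ℝ)) ((WT (Fin.last m) : ℤ) : ℝ) := by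
    funext j
    induction j using Fin.lastCases with
    | last => rw [Fin.snoc_last, hWT (Fin.last m)]; push_cast; rfl
    | cast j => rw [Fin.snoc_castSucc, hWT (Fin.castSucc j)]; push_cast; rfl
  have hWTlast_ge : (n : ℤ) + 1 ≤ WT (Fin.last m) := by
    apply hheight (fun j => WT (Fin.castSucc j)) (WT (Fin.last m))
    rw [← hTR_snoc]
    exact hTR_int
  have hclast : ∀ i, c i (Fin.last m) = 1 := by
    intro i
    have h1 : ((c i (Fin.last m) : ℤ) : ℚ) = 1 := by rw [← hc]; exact halast i
    exact_mod_cast h1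
  have hWTlast : WT (Fin.last m) = (2 * n + 2 : ℤ) - W (Fin.last m) := by
    rw [hWTdef]
    simp only [hclast]
    rw [Finset.sum_const, Finset.card_univ, Fintype.card_fin]
    push_cast
    ring
  have hWlast_le : W (Fin.last m) ≤ (n : ℤ) + 1 := by
    rw [hWTlast] at hWTlast_ge
    omega
  -- ======== conclusion ========
  refine ⟨fun j => ⟨W j, hW j⟩, hSR_int, ?_⟩
  have hfinal : W (Fin.last m) = (n : ℤ) + 1 := le_antisymm hWlast_le hWlast_ge
  rw [hW (Fin.last m), hfinal]
  push_cast
  ring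
end

section
/- Let n < m be positive integers with m > 2n and let α₁,…,αₙ, β_{n+1},…,β_m be positive integers with α₁+⋯+αₙ = β_{n+1}+⋯+β_m. Set b₀ = 0 ∈ ℤ^m, b_i = e_i for i = 1,…,m, and b_{m+1} = (α₁,…,αₙ,−β_{n+1},…,−β_m). Let Q ⊆ {0,1,…,m+1} be a subset with card(Q) ≤ n+1 and Q ≠ {0,1,…,n}. Then the points b_q for q ∈ Q lie on a common proper face of Δ(α,β): there exist a linear functional φ on ℝ^m and c ∈ ℝ such that φ(x) ≤ c for all x ∈ Δ(α,β), φ(b_q) = c for all q ∈ Q, and φ(x) < c for some x ∈ Δ(α,β). -/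
noncomputable def lfun {m : ℕ} (w : Fin m → ℝ) : (Fin m → ℝ) →ₗ[ℝ] ℝ where
  toFun x := ∑ i, w i * x i
  map_add' x y := by simp [mul_add, Finset.sum_add_distrib]
  map_smul' r x := by
    simp only [Pi.smul_apply, smul_eq_mul, RingHom.id_apply, Finset.mul_sum]
    exact Finset.sum_congr rfl fun i _ => by ring

@[simp] lemma lfun_apply {m : ℕ} (w : Fin m → ℝ) (x : Fin m → ℝ) :
    lfun w x = ∑ i, w i * x i := rfl

lemma sum_if_single {m : ℕ} (g : Fin m → ℝ) (a : ℕ) (ha : a < m) :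
    ∑ i : Fin m, (if (i : ℕ) = a then g i else 0) = g ⟨a, ha⟩ := by
  rw [Finset.sum_eq_single (⟨a, ha⟩ : Fin m)]
  · simp
  · intro i _ hne
    rw [if_neg]
    intro hc
    exact hne (Fin.ext hc)
  · simp

set_option maxHeartbeats 4000000 in
/-- if Q ⊆ {0,…,m+1} has card ≤ n+1 and Q ≠ {0,…,n}, then the
points b_q, q ∈ Q, lie on a common proper face of Δ(α,β). -/
theorem stmt_6 (n m : ℕ) (hn : 0 < n) (hnm : 2 * n < m)
    (α : Fin n → ℕ) (β : Fin (m - n) → ℕ)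
    (hα : ∀ i, 0 < α i) (hβ : ∀ j, 0 < β j)
    (hsum : ∑ i, α i = ∑ j, β j)
    (b : Fin (m + 2) → Fin m → ℝ)
    (hb0 : b 0 = 0)
    (hbe : ∀ q : Fin (m + 2), ∀ hq1 : 1 ≤ (q : ℕ), (q : ℕ) ≤ m →
      ∀ i : Fin m, b q i = if (i : ℕ) + 1 = (q : ℕ) then 1 else 0)
    (hbm : ∀ i : Fin m, b ⟨m + 1, by omega⟩ i =
      if h : (i : ℕ) < n then (α ⟨i, h⟩ : ℝ)
      else -(β ⟨(i : ℕ) - n, by have := i.isLt; omega⟩ : ℝ))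
    (Δ : Set (Fin m → ℝ))
    (hΔ : Δ = convexHull ℝ (Set.range b))
    (Q : Finset (Fin (m + 2)))
    (hQcard : Q.card ≤ n + 1)
    (hQne : Q ≠ Finset.univ.filter (fun q : Fin (m + 2) => (q : ℕ) ≤ n)) :
    ∃ φ : (Fin m → ℝ) →ₗ[ℝ] ℝ, ∃ c : ℝ,
      (∀ x ∈ Δ, φ x ≤ c) ∧ (∀ q ∈ Q, φ (b q) = c) ∧ (∃ x ∈ Δ, φ x < c) := by
  -- the "low" index set R = {q : q ≤ n}
  set R : Finset (Fin (m + 2)) := Finset.univ.filter (fun q : Fin (m + 2) => (q : ℕ) ≤ n) with hR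
  have hRcard : R.card = n + 1 := by
    have : R = Finset.Iic (⟨n, by omega⟩ : Fin (m + 2)) := by
      ext q
      simp [hR, Fin.le_def]
    rw [this, Fin.card_Iic]
  -- find q₁ ∈ {0,…,n} \ Q
  have hq1ex : ∃ q₁ : Fin (m + 2), (q₁ : ℕ) ≤ n ∧ q₁ ∉ Q := by
    by_contra h
    push_neg at h
    have hsub : R ⊆ Q := by
      intro q hq
      simp only [hR, Finset.mem_filter] at hq
      exact h q hq.2
    exact hQne (Finset.eq_of_subset_of_card_le hsub (by omega)).symm
  -- find q₀ ∈ {n+1,…,m+1} \ Q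
  have hq0ex : ∃ q₀ : Fin (m + 2), n + 1 ≤ (q₀ : ℕ) ∧ q₀ ∉ Q := by
    by_contra h
    push_neg at h
    have hsub : Rᶜ ⊆ Q := by
      intro q hq
      simp only [hR, Finset.mem_compl, Finset.mem_filter, Finset.mem_univ, true_and,
        not_le] at hq
      exact h q hq
    have := Finset.card_le_card hsub
    rw [Finset.card_compl, hRcard] at this
    simp only [Fintype.card_fin] at this
    omega
  obtain ⟨q₁, hq₁n, hq₁Q⟩ := hq1ex
  obtain ⟨q₀, hq₀n, hq₀Q⟩ := hq0ex
  have hq₀m : (q₀ : ℕ) ≤ m + 1 := by omega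
  -- the last point
  set bl : Fin (m + 2) := ⟨m + 1, by omega⟩ with hbl
  set d : Fin m → ℝ := fun i =>
    if h : (i : ℕ) < n then (α ⟨i, h⟩ : ℝ)
    else -(β ⟨(i : ℕ) - n, by have := i.isLt; omega⟩ : ℝ) with hd
  have hbld : ∀ i, b bl i = d i := hbm
  -- evaluation at unit vectors
  have hval : ∀ (w : Fin m → ℝ) (q : Fin (m + 2)) (h1 : 1 ≤ (q : ℕ)) (h2 : (q : ℕ) ≤ m),
      lfun w (b q) = w ⟨(q : ℕ) - 1, by omega⟩ := by
    intro w q h1 h2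
    rw [lfun_apply, Finset.sum_eq_single (⟨(q : ℕ) - 1, by omega⟩ : Fin m)]
    · rw [hbe q h1 h2, if_pos (show (q : ℕ) - 1 + 1 = (q : ℕ) by omega), mul_one]
    · intro i _ hne
      rw [hbe q h1 h2, if_neg, mul_zero]
      intro hc
      exact hne (Fin.ext (by simp only [Fin.val_mk]; omega))
    · simp
  -- evaluation at origin
  have hval0 : ∀ w : Fin m → ℝ, lfun w (b 0) = 0 := by
    intro w; rw [hb0]; exact map_zero _
  -- evaluation at last point
  have hvall : ∀ w : Fin m → ℝ, lfun w (b bl) = ∑ i : Fin m, w i * d i := by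
    intro w
    rw [lfun_apply]
    exact Finset.sum_congr rfl fun i _ => by rw [hbld]
  -- splitting a sum over Fin m at n
  have hsplit : ∀ f : Fin m → ℝ,
      ∑ i : Fin m, f i =
        (∑ i ∈ Finset.range n, if h : i < m then f ⟨i, h⟩ else 0) +
        (∑ j ∈ Finset.range (m - n), if h : n + j < m then f ⟨n + j, h⟩ else 0) := by
    intro f
    have h1 : ∑ i : Fin m, f i = ∑ i ∈ Finset.range m,
        (fun k => if h : k < m then f ⟨k, h⟩ else 0) i := by
      rw [← Fin.sum_univ_eq_sum_range]
      exact Finset.sum_congr rfl fun i _ => by simp [i.isLt]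
    rw [h1, Finset.range_eq_Ico,
      ← Finset.sum_Ico_consecutive _ (Nat.zero_le n) (by omega : n ≤ m)]
    congr 1
    · rw [Finset.range_eq_Ico]
    · rw [Finset.sum_Ico_eq_sum_range]
  -- the key: sum of d over all coordinates is zero
  have hd0 : ∑ i : Fin m, d i = 0 := by
    rw [hsplit d]
    have hA : (∑ i ∈ Finset.range n, if h : i < m then d ⟨i, h⟩ else 0) =
        ∑ i : Fin n, (α i : ℝ) := by
      rw [← Fin.sum_univ_eq_sum_range (fun i => if h : i < m then d ⟨i, h⟩ else 0) n]
      refine Finset.sum_congr rfl fun i _ => ?_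
      rw [dif_pos (by omega : (i : ℕ) < m)]
      simp only [hd]
      rw [dif_pos (by exact i.isLt : ((⟨(i : ℕ), by omega⟩ : Fin m) : ℕ) < n)]
    have hB : (∑ j ∈ Finset.range (m - n), if h : n + j < m then d ⟨n + j, h⟩ else 0) =
        ∑ j : Fin (m - n), -(β j : ℝ) := by
      rw [← Fin.sum_univ_eq_sum_range (fun j => if h : n + j < m then d ⟨n + j, h⟩ else 0)]
      refine Finset.sum_congr rfl fun j _ => ?_
      have hj : (j : ℕ) < m - n := j.isLt
      rw [dif_pos (by omega : n + (j : ℕ) < m)]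
      simp only [hd]
      rw [dif_neg (by simp only [Fin.val_mk]; omega :
        ¬ ((⟨n + (j : ℕ), by omega⟩ : Fin m) : ℕ) < n)]
      exact congrArg (fun t => -((β t : ℕ) : ℝ)) (Fin.ext (by simp only [Fin.val_mk]; omega))
    rw [hA, hB]
    have : (∑ i : Fin n, (α i : ℝ)) = ∑ j : Fin (m - n), (β j : ℝ) := by
      exact_mod_cast congrArg (Nat.cast : ℕ → ℝ) hsum
    rw [this]
    rw [Finset.sum_neg_distrib]
    ring
  -- a uniform way to finish
  have main : ∀ (w : Fin m → ℝ) (c : ℝ),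
      (∀ q : Fin (m + 2), lfun w (b q) ≤ c) →
      (∀ q ∈ Q, lfun w (b q) = c) →
      lfun w (b q₁) < c →
      ∃ φ : (Fin m → ℝ) →ₗ[ℝ] ℝ, ∃ c : ℝ,
        (∀ x ∈ Δ, φ x ≤ c) ∧ (∀ q ∈ Q, φ (b q) = c) ∧ (∃ x ∈ Δ, φ x < c) := by
    intro w c hle heq hlt
    refine ⟨lfun w, c, ?_, heq, ⟨b q₁, ?_, hlt⟩⟩
    · intro x hx
      rw [hΔ] at hx
      have hsubset : convexHull ℝ (Set.range b) ⊆ {y | lfun w y ≤ c} :=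
        convexHull_min (by rintro y ⟨q, rfl⟩; exact hle q)
          (convex_halfSpace_le (lfun w).isLinear c)
      exact hsubset hx
    · rw [hΔ]
      exact subset_convexHull ℝ _ (Set.mem_range_self q₁)
  -- case split
  by_cases h1 : (q₁ : ℕ) = 0
  · -- q₁ = 0 : c = 1
    have hq₁0 : q₁ = 0 := Fin.ext (by simpa using h1)
    by_cases h0 : (q₀ : ℕ) = m + 1
    · -- Case A: w ≡ 1
      have hq₀bl : q₀ = bl := Fin.ext (by simpa [hbl] using h0)
      refine main (fun _ => 1) 1 ?_ ?_ ?_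
      · intro q
        rcases Nat.eq_zero_or_pos (q : ℕ) with hq | hq
        · rw [show q = 0 from Fin.ext (by simpa using hq), hval0]; norm_num
        · rcases Nat.lt_or_ge (q : ℕ) (m + 1) with hq' | hq'
          · rw [hval _ q hq (by omega)]
          · rw [show q = bl from Fin.ext (by have := q.isLt; simp [hbl]; omega), hvall]
            simp only [one_mul]
            rw [hd0]; norm_num
      · intro q hq
        have hne1 : q ≠ q₁ := fun h => hq₁Q (h ▸ hq)
        have hne0 : q ≠ q₀ := fun h => hq₀Q (h ▸ hq)
        have hq1' : 1 ≤ (q : ℕ) := by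
          rcases Nat.eq_zero_or_pos (q : ℕ) with h | h
          · exact absurd (Fin.ext (by simp [h1, h]) : q = q₁) hne1
          · exact h
        have hqm : (q : ℕ) ≤ m := by
          have := q.isLt
          have : (q : ℕ) ≠ m + 1 := fun h => hne0 (Fin.ext (by omega))
          omega
        rw [hval _ q hq1' hqm]
      · rw [hq₁0, hval0]; norm_num
    · -- Case B: n + 1 ≤ q₀ ≤ m
      have hq₀m' : (q₀ : ℕ) ≤ m := by omega
      set k0 : Fin (m - n) := ⟨(q₀ : ℕ) - 1 - n, by omega⟩ with hk0
      have hβpos : (0 : ℝ) < (β k0 : ℝ) := by exact_mod_cast hβ k0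
      obtain ⟨w, hw⟩ : ∃ w : Fin m → ℝ, w = fun i : Fin m =>
          if (i : ℕ) = (q₀ : ℕ) - 1 then 1 - 1 / (β k0 : ℝ) else 1 := ⟨_, rfl⟩
      have hwle : ∀ i, w i ≤ 1 := by
        intro i
        simp only [hw, Fin.val_mk]
        split_ifs
        · have : 0 < 1 / (β k0 : ℝ) := by positivity
          linarith
        · exact le_refl 1
      have hlast : lfun w (b bl) = 1 := by
        rw [hvall]
        have hpt : ∀ i : Fin m, w i * d i =
            d i + (if (i : ℕ) = (q₀ : ℕ) - 1 then (-(1 / (β k0 : ℝ))) * d i else 0) := by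
          intro i
          simp only [hw, Fin.val_mk]
          split_ifs
          · ring
          · ring
        rw [Finset.sum_congr rfl fun i _ => hpt i, Finset.sum_add_distrib, hd0,
          sum_if_single (fun i => (-(1 / (β k0 : ℝ))) * d i) ((q₀ : ℕ) - 1) (by omega)]
        have hdv : d ⟨(q₀ : ℕ) - 1, by omega⟩ = -(β k0 : ℝ) := by
          simp only [hd]
          rw [dif_neg (by simp only [Fin.val_mk]; omega :
            ¬ (((⟨(q₀ : ℕ) - 1, by omega⟩ : Fin m) : ℕ) < n))]
        rw [hdv]
        field_simp
        norm_num
      refine main w 1 ?_ ?_ ?_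
      · intro q
        rcases Nat.eq_zero_or_pos (q : ℕ) with hq | hq
        · rw [show q = 0 from Fin.ext (by simpa using hq), hval0]; norm_num
        · rcases Nat.lt_or_ge (q : ℕ) (m + 1) with hq' | hq'
          · rw [hval _ q hq (by omega)]; exact hwle _
          · rw [show q = bl from Fin.ext (by have := q.isLt; simp [hbl]; omega), hlast]
      · intro q hq
        have hne1 : q ≠ q₁ := fun h => hq₁Q (h ▸ hq)
        have hne0 : q ≠ q₀ := fun h => hq₀Q (h ▸ hq)
        have hq1' : 1 ≤ (q : ℕ) := by
          rcases Nat.eq_zero_or_pos (q : ℕ) with h | h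
          · exact absurd (Fin.ext (by simp [h1, h]) : q = q₁) hne1
          · exact h
        rcases Nat.lt_or_ge (q : ℕ) (m + 1) with hq' | hq'
        · rw [hval _ q hq1' (by omega)]
          simp only [hw, Fin.val_mk]
          rw [if_neg]
          intro hc
          exact hne0 (Fin.ext (by omega))
        · rw [show q = bl from Fin.ext (by have := q.isLt; simp [hbl]; omega), hlast]
      · rw [hq₁0, hval0]; norm_num
  · -- q₁ ≥ 1 : c = 0
    have hq₁1 : 1 ≤ (q₁ : ℕ) := by omega
    set j0 : Fin n := ⟨(q₁ : ℕ) - 1, by omega⟩ with hj0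
    have hαpos : (0 : ℝ) < (α j0 : ℝ) := by exact_mod_cast hα j0
    have hda : d ⟨(q₁ : ℕ) - 1, by omega⟩ = (α j0 : ℝ) := by
      simp only [hd]
      rw [dif_pos (by simp only [Fin.val_mk]; omega : ((⟨(q₁ : ℕ) - 1, by omega⟩ : Fin m) : ℕ) < n)]
    by_cases h0 : (q₀ : ℕ) = m + 1
    · -- Case C: w = -1 at q₁-1
      obtain ⟨w, hw⟩ : ∃ w : Fin m → ℝ,
          w = fun i : Fin m => if (i : ℕ) = (q₁ : ℕ) - 1 then -1 else 0 := ⟨_, rfl⟩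
      have hwle : ∀ i, w i ≤ 0 := by
        intro i; simp only [hw, Fin.val_mk]; split_ifs <;> norm_num
      have hlast : lfun w (b bl) = -(α j0 : ℝ) := by
        rw [hvall]
        have hpt : ∀ i : Fin m, w i * d i =
            (if (i : ℕ) = (q₁ : ℕ) - 1 then -d i else 0) := by
          intro i; simp only [hw, Fin.val_mk]; split_ifs <;> ring
        rw [Finset.sum_congr rfl fun i _ => hpt i,
          sum_if_single (fun i => -d i) ((q₁ : ℕ) - 1) (by omega), hda]
      refine main w 0 ?_ ?_ ?_
      · intro q
        rcases Nat.eq_zero_or_pos (q : ℕ) with hq | hq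
        · rw [show q = 0 from Fin.ext (by simpa using hq), hval0]
        · rcases Nat.lt_or_ge (q : ℕ) (m + 1) with hq' | hq'
          · rw [hval _ q hq (by omega)]; exact hwle _
          · rw [show q = bl from Fin.ext (by have := q.isLt; simp [hbl]; omega), hlast]
            linarith
      · intro q hq
        have hne1 : q ≠ q₁ := fun h => hq₁Q (h ▸ hq)
        have hne0 : q ≠ q₀ := fun h => hq₀Q (h ▸ hq)
        rcases Nat.eq_zero_or_pos (q : ℕ) with h | h
        · rw [show q = 0 from Fin.ext (by simpa using h), hval0]
        · have hqm : (q : ℕ) ≤ m := by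
            have := q.isLt
            have : (q : ℕ) ≠ m + 1 := fun hc => hne0 (Fin.ext (by omega))
            omega
          rw [hval _ q h hqm]
          simp only [hw, Fin.val_mk]
          rw [if_neg]
          intro hc
          exact hne1 (Fin.ext (by omega))
      · rw [hval _ q₁ hq₁1 (by omega)]
        simp only [hw, Fin.val_mk]
        norm_num
    · -- Case D: both q₁ ≥ 1 and n+1 ≤ q₀ ≤ m
      have hq₀m' : (q₀ : ℕ) ≤ m := by omega
      have hm1 : (q₁ : ℕ) - 1 < m := by omega
      have hm0 : (q₀ : ℕ) - 1 < m := by omega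
      set k0 : Fin (m - n) := ⟨(q₀ : ℕ) - 1 - n, by omega⟩ with hk0
      have hβpos : (0 : ℝ) < (β k0 : ℝ) := by exact_mod_cast hβ k0
      have hdb : d ⟨(q₀ : ℕ) - 1, hm0⟩ = -(β k0 : ℝ) := by
        simp only [hd]
        rw [dif_neg (by simp only [Fin.val_mk]; omega :
          ¬ (((⟨(q₀ : ℕ) - 1, hm0⟩ : Fin m) : ℕ) < n))]
      have hda' : d ⟨(q₁ : ℕ) - 1, hm1⟩ = (α j0 : ℝ) := by
        simp only [hd]
        rw [dif_pos (by simp only [Fin.val_mk]; omega :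
          ((⟨(q₁ : ℕ) - 1, hm1⟩ : Fin m) : ℕ) < n)]
      have hab : (q₁ : ℕ) - 1 ≠ (q₀ : ℕ) - 1 := by omega
      obtain ⟨w, hw⟩ : ∃ w : Fin m → ℝ, w = fun i : Fin m =>
          if (i : ℕ) = (q₁ : ℕ) - 1 then -(β k0 : ℝ)
          else if (i : ℕ) = (q₀ : ℕ) - 1 then -(α j0 : ℝ) else 0 := ⟨_, rfl⟩
      have hwv1 : ∀ i : Fin m, (i : ℕ) = (q₁ : ℕ) - 1 → w i = -(β k0 : ℝ) := by
        intro i hi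
        simp only [hw]
        rw [if_pos hi]
      have hwv2 : ∀ i : Fin m, (i : ℕ) = (q₀ : ℕ) - 1 → w i = -(α j0 : ℝ) := by
        intro i hi
        have hni : ¬ ((i : ℕ) = (q₁ : ℕ) - 1) := by omega
        simp only [hw]
        rw [if_neg hni, if_pos hi]
      have hwv0 : ∀ i : Fin m, (i : ℕ) ≠ (q₁ : ℕ) - 1 → (i : ℕ) ≠ (q₀ : ℕ) - 1 →
          w i = 0 := by
        intro i h1' h2'
        simp only [hw]
        rw [if_neg h1', if_neg h2']
      have hwle : ∀ i, w i ≤ 0 := by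
        intro i
        by_cases hi1 : (i : ℕ) = (q₁ : ℕ) - 1
        · rw [hwv1 i hi1]; linarith
        · by_cases hi2 : (i : ℕ) = (q₀ : ℕ) - 1
          · rw [hwv2 i hi2]; linarith
          · rw [hwv0 i hi1 hi2]
      have hlast : lfun w (b bl) = 0 := by
        have hpt : ∀ i : Fin m, w i * d i =
            (if (i : ℕ) = (q₁ : ℕ) - 1 then -(β k0 : ℝ) * d i else 0) +
            (if (i : ℕ) = (q₀ : ℕ) - 1 then -(α j0 : ℝ) * d i else 0) := by
          intro i
          by_cases hi1 : (i : ℕ) = (q₁ : ℕ) - 1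
          · rw [hwv1 i hi1, if_pos hi1, if_neg (hi1 ▸ hab), add_zero]
          · rw [if_neg hi1, zero_add]
            by_cases hi2 : (i : ℕ) = (q₀ : ℕ) - 1
            · rw [hwv2 i hi2, if_pos hi2]
            · rw [hwv0 i hi1 hi2, if_neg hi2, zero_mul]
        have e1 : ∑ i : Fin m, w i * d i =
            (∑ i : Fin m, if (i : ℕ) = (q₁ : ℕ) - 1 then -(β k0 : ℝ) * d i else 0) +
            (∑ i : Fin m, if (i : ℕ) = (q₀ : ℕ) - 1 then -(α j0 : ℝ) * d i else 0) := by
          rw [← Finset.sum_add_distrib]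
          exact Finset.sum_congr rfl fun i _ => hpt i
        have s1 : (∑ i : Fin m, if (i : ℕ) = (q₁ : ℕ) - 1 then -(β k0 : ℝ) * d i else 0) =
            -(β k0 : ℝ) * d ⟨(q₁ : ℕ) - 1, hm1⟩ :=
          sum_if_single (fun i => -(β k0 : ℝ) * d i) ((q₁ : ℕ) - 1) hm1
        have s2 : (∑ i : Fin m, if (i : ℕ) = (q₀ : ℕ) - 1 then -(α j0 : ℝ) * d i else 0) =
            -(α j0 : ℝ) * d ⟨(q₀ : ℕ) - 1, hm0⟩ :=
          sum_if_single (fun i => -(α j0 : ℝ) * d i) ((q₀ : ℕ) - 1) hm0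
        rw [hvall, e1, s1, s2, hda', hdb]
        ring
      refine main w 0 ?_ ?_ ?_
      · intro q
        rcases Nat.eq_zero_or_pos (q : ℕ) with hq | hq
        · rw [show q = 0 from Fin.ext (by simpa using hq), hval0]
        · rcases Nat.lt_or_ge (q : ℕ) (m + 1) with hq' | hq'
          · rw [hval _ q hq (by omega)]; exact hwle _
          · rw [show q = bl from Fin.ext (by have := q.isLt; simp [hbl]; omega), hlast]
      · intro q hq
        have hne1 : q ≠ q₁ := fun h => hq₁Q (h ▸ hq)
        have hne0 : q ≠ q₀ := fun h => hq₀Q (h ▸ hq)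
        rcases Nat.eq_zero_or_pos (q : ℕ) with h | h
        · rw [show q = 0 from Fin.ext (by simpa using h), hval0]
        · rcases Nat.lt_or_ge (q : ℕ) (m + 1) with hq' | hq''
          · rw [hval _ q h (by omega)]
            refine hwv0 _ ?_ ?_
            · intro hc
              exact hne1 (Fin.ext (by simp only [Fin.val_mk] at hc; omega))
            · intro hc
              exact hne0 (Fin.ext (by simp only [Fin.val_mk] at hc; omega))
          · rw [show q = bl from Fin.ext (by have := q.isLt; simp [hbl]; omega), hlast]
      · rw [hval _ q₁ hq₁1 (by omega)]
        rw [hwv1 _ (by simp only [Fin.val_mk] :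
          ((⟨(q₁ : ℕ) - 1, by omega⟩ : Fin m) : ℕ) = (q₁ : ℕ) - 1)]
        linarith
end

section
/- Let B = {b₁,…,b₇} ⊆ ℤ⁵ where b₁,…,b₅ are the standard unit basis vectors of ℝ⁵, b₆ = (9,1,−5,−3,−2), and b₇ = 0, and let Δ(B) ⊆ ℝ⁵ be the convex hull of B. Then the dilated polytope 2Δ(B) contains no interior lattice points, while (2,1,−1,0,0) ∈ ℤ⁵ is an interior lattice point of 3Δ(B). -/
open Pointwise

/-- Half-spaces are convex. -/
lemma halfspace_convex' (n : ℕ) (a : Fin n → ℝ) (c : ℝ) :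
    Convex ℝ {y : Fin n → ℝ | ∑ i, a i * y i ≤ c} := by
  intro y hy z hz s t hs ht hst
  simp only [Set.mem_setOf_eq] at hy hz ⊢
  have hsum : ∑ i, a i * (s • y + t • z) i
      = s * ∑ i, a i * y i + t * ∑ i, a i * z i := by
    rw [Finset.mul_sum, Finset.mul_sum, ← Finset.sum_add_distrib]
    apply Finset.sum_congr rfl
    intro i _
    simp only [Pi.add_apply, Pi.smul_apply, smul_eq_mul]
    ring
  rw [hsum]
  calc s * ∑ i, a i * y i + t * ∑ i, a i * z i
      ≤ s * c + t * c :=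
        add_le_add (mul_le_mul_of_nonneg_left hy hs) (mul_le_mul_of_nonneg_left hz ht)
    _ = c := by rw [← add_mul, hst, one_mul]

/-- A point in the interior of a set contained in a half-space satisfies the
strict inequality. -/
lemma interior_strict (n : ℕ) (a : Fin n → ℝ) (i0 : Fin n) (ha : a i0 ≠ 0)
    (c : ℝ) (S : Set (Fin n → ℝ)) (hS : ∀ z ∈ S, ∑ i, a i * z i ≤ c)
    {y : Fin n → ℝ} (hy : y ∈ interior S) : ∑ i, a i * y i < c := by
  rcases (hS y (interior_subset hy)).lt_or_eq with h | h
  · exact h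
  · exfalso
    rcases Metric.isOpen_iff.1 isOpen_interior y hy with ⟨ε, hε, hball⟩
    set s : ℝ := if 0 < a i0 then 1 else -1 with hs
    have habs : |s| = 1 := by
      rcases lt_or_ge 0 (a i0) with h' | h'
      · simp [hs, if_pos h']
      · simp [hs, if_neg (not_lt.2 h')]
    set z : Fin n → ℝ := y + (ε / 2 * s) • (Pi.single i0 1 : Fin n → ℝ) with hz
    have hzS : z ∈ S := by
      apply interior_subset (hball _)
      rw [Metric.mem_ball, dist_pi_lt_iff hε]
      intro i
      by_cases hi : i = i0
      · subst hi
        simp only [hz, Pi.add_apply, Pi.smul_apply, Pi.single_eq_same,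
          smul_eq_mul, mul_one, Real.dist_eq, add_sub_cancel_left]
        rw [abs_mul, habs, mul_one, abs_of_pos (by linarith)]
        linarith
      · simp only [hz, Pi.add_apply, Pi.smul_apply, Pi.single_eq_of_ne hi,
          smul_eq_mul, mul_zero, add_zero, dist_self]
        exact hε
    have hsum : ∑ i, a i * z i = (∑ i, a i * y i) + a i0 * (ε / 2 * s) := by
      have : ∀ i, a i * z i = a i * y i + a i * ((ε / 2 * s) * (Pi.single i0 1 : Fin n → ℝ) i) := by
        intro i
        simp only [hz, Pi.add_apply, Pi.smul_apply, smul_eq_mul]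
        ring
      rw [Finset.sum_congr rfl fun i _ => this i, Finset.sum_add_distrib]
      congr 1
      rw [Finset.sum_eq_single i0]
      · simp
      · intro i _ hi
        simp [Pi.single_eq_of_ne hi]
      · intro hcon
        exact absurd (Finset.mem_univ i0) hcon
    have hpos : 0 < a i0 * (ε / 2 * s) := by
      rcases lt_or_ge 0 (a i0) with h' | h'
      · have : s = 1 := by simp [hs, if_pos h']
        rw [this]; positivity
      · have h'' : a i0 < 0 := lt_of_le_of_ne h' ha
        have : s = -1 := by simp [hs, if_neg (not_lt.2 h')]
        rw [this]
        nlinarith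
    have := hS z hzS
    rw [hsum, h] at this
    linarith

set_option maxHeartbeats 1000000 in
/-- for B = {e₁,…,e₅,(9,1,−5,−3,−2),0} ⊆ ℤ⁵, the polytope 2Δ(B)
has no interior lattice points, while (2,1,−1,0,0) is interior to 3Δ(B). -/
theorem stmt_16
    (b : Fin 7 → Fin 5 → ℝ)
    (hb : b = ![![1, 0, 0, 0, 0], ![0, 1, 0, 0, 0], ![0, 0, 1, 0, 0],
      ![0, 0, 0, 1, 0], ![0, 0, 0, 0, 1], ![9, 1, -5, -3, -2],
      ![0, 0, 0, 0, 0]])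
    (Δ : Set (Fin 5 → ℝ))
    (hΔ : Δ = convexHull ℝ (Set.range b)) :
    (¬ ∃ x : Fin 5 → ℤ, (fun i => (x i : ℝ)) ∈ interior ((2 : ℝ) • Δ)) ∧
      (![(2 : ℝ), 1, -1, 0, 0] ∈ interior ((3 : ℝ) • Δ)) := by
  subst hb hΔ
  constructor
  · -- no interior lattice points in 2Δ
    rintro ⟨x, hx⟩
    -- any valid inequality on all vertices gives a strict inequality at x
    have key : ∀ (a : Fin 5 → ℤ) (i0 : Fin 5), a i0 ≠ 0 → ∀ c : ℤ,
        (∀ k : Fin 7, ∑ i, (a i : ℝ) *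
          (![![1, 0, 0, 0, 0], ![0, 1, 0, 0, 0], ![0, 0, 1, 0, 0],
            ![0, 0, 0, 1, 0], ![0, 0, 0, 0, 1], ![9, 1, -5, -3, -2],
            ![0, 0, 0, 0, 0]] : Fin 7 → Fin 5 → ℝ) k i ≤ (c : ℝ)) →
        ∑ i, a i * x i < 2 * c := by
      intro a i0 hai0 c hver
      have hsub : ∀ z ∈ (2 : ℝ) • convexHull ℝ (Set.range
          (![![1, 0, 0, 0, 0], ![0, 1, 0, 0, 0], ![0, 0, 1, 0, 0],
            ![0, 0, 0, 1, 0], ![0, 0, 0, 0, 1], ![9, 1, -5, -3, -2],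
            ![0, 0, 0, 0, 0]] : Fin 7 → Fin 5 → ℝ)),
          ∑ i, (a i : ℝ) * z i ≤ 2 * c := by
        intro z hz
        obtain ⟨w, hw, rfl⟩ := hz
        have hw' : ∑ i, (a i : ℝ) * w i ≤ c := by
          have := convexHull_min (by
            rintro _ ⟨k, rfl⟩
            exact hver k) (halfspace_convex' 5 (fun i => (a i : ℝ)) c) hw
          exact this
        have : ∑ i, (a i : ℝ) * ((2 : ℝ) • w) i = 2 * ∑ i, (a i : ℝ) * w i := by
          rw [Finset.mul_sum]
          apply Finset.sum_congr rfl
          intro i _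
          simp only [Pi.smul_apply, smul_eq_mul]
          ring
        rw [this]
        linarith
      have hstrict := interior_strict 5 (fun i => (a i : ℝ)) i0
        ((by exact_mod_cast hai0 : ((a i0 : ℝ)) ≠ 0)) (2 * c) _ hsub hx
      have hcast : ((∑ i, a i * x i : ℤ) : ℝ) < ((2 * c : ℤ) : ℝ) := by
        push_cast
        exact hstrict
      exact_mod_cast hcast
    have h1 := key ![-5, 0, -9, 0, 0] 0 (by norm_num) 0
      (by intro k; fin_cases k <;> simp [Fin.sum_univ_five, show (5:Fin 7) = Fin.succ 4 from rfl, show (6:Fin 7) = Fin.succ (Fin.succ 4) from rfl, Matrix.cons_val_succ] <;> norm_num)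
    have h2 := key ![-2, 0, 0, 0, -9] 0 (by norm_num) 0
      (by intro k; fin_cases k <;> simp [Fin.sum_univ_five, show (5:Fin 7) = Fin.succ 4 from rfl, show (6:Fin 7) = Fin.succ (Fin.succ 4) from rfl, Matrix.cons_val_succ] <;> norm_num)
    have h3 := key ![-1, 0, 0, -3, 0] 0 (by norm_num) 0
      (by intro k; fin_cases k <;> simp [Fin.sum_univ_five, show (5:Fin 7) = Fin.succ 4 from rfl, show (6:Fin 7) = Fin.succ (Fin.succ 4) from rfl, Matrix.cons_val_succ] <;> norm_num)
    have h4 := key ![-1, 0, 0, 0, 0] 0 (by norm_num) 0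
      (by intro k; fin_cases k <;> simp [Fin.sum_univ_five, show (5:Fin 7) = Fin.succ 4 from rfl, show (6:Fin 7) = Fin.succ (Fin.succ 4) from rfl, Matrix.cons_val_succ] <;> norm_num)
    have h5 := key ![0, -5, -1, 0, 0] 1 (by norm_num) 0
      (by intro k; fin_cases k <;> simp [Fin.sum_univ_five, show (5:Fin 7) = Fin.succ 4 from rfl, show (6:Fin 7) = Fin.succ (Fin.succ 4) from rfl, Matrix.cons_val_succ] <;> norm_num)
    have h6 := key ![0, -3, 0, -1, 0] 1 (by norm_num) 0
      (by intro k; fin_cases k <;> simp [Fin.sum_univ_five, show (5:Fin 7) = Fin.succ 4 from rfl, show (6:Fin 7) = Fin.succ (Fin.succ 4) from rfl, Matrix.cons_val_succ] <;> norm_num)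
    have h7 := key ![0, -2, 0, 0, -1] 1 (by norm_num) 0
      (by intro k; fin_cases k <;> simp [Fin.sum_univ_five, show (5:Fin 7) = Fin.succ 4 from rfl, show (6:Fin 7) = Fin.succ (Fin.succ 4) from rfl, Matrix.cons_val_succ] <;> norm_num)
    have h8 := key ![0, -1, 0, 0, 0] 1 (by norm_num) 0
      (by intro k; fin_cases k <;> simp [Fin.sum_univ_five, show (5:Fin 7) = Fin.succ 4 from rfl, show (6:Fin 7) = Fin.succ (Fin.succ 4) from rfl, Matrix.cons_val_succ] <;> norm_num)
    have h9 := key ![1, 1, 1, 1, 1] 0 (by norm_num) 1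
      (by intro k; fin_cases k <;> simp [Fin.sum_univ_five, show (5:Fin 7) = Fin.succ 4 from rfl, show (6:Fin 7) = Fin.succ (Fin.succ 4) from rfl, Matrix.cons_val_succ] <;> norm_num)
    have h10 := key ![2, 2, 2, 2, 1] 0 (by norm_num) 2
      (by intro k; fin_cases k <;> simp [Fin.sum_univ_five, show (5:Fin 7) = Fin.succ 4 from rfl, show (6:Fin 7) = Fin.succ (Fin.succ 4) from rfl, Matrix.cons_val_succ] <;> norm_num)
    have h11 := key ![3, 3, 3, 2, 3] 0 (by norm_num) 3
      (by intro k; fin_cases k <;> simp [Fin.sum_univ_five, show (5:Fin 7) = Fin.succ 4 from rfl, show (6:Fin 7) = Fin.succ (Fin.succ 4) from rfl, Matrix.cons_val_succ] <;> norm_num)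
    have h12 := key ![5, 5, 4, 5, 5] 0 (by norm_num) 5
      (by intro k; fin_cases k <;> simp [Fin.sum_univ_five, show (5:Fin 7) = Fin.succ 4 from rfl, show (6:Fin 7) = Fin.succ (Fin.succ 4) from rfl, Matrix.cons_val_succ] <;> norm_num)
    simp [Fin.sum_univ_five] at h1 h2 h3 h4 h5 h6 h7 h8 h9 h10 h11 h12
    omega
  · -- (2,1,-1,0,0) is interior to 3Δ
    set B : Fin 7 → Fin 5 → ℝ :=
      ![![1, 0, 0, 0, 0], ![0, 1, 0, 0, 0], ![0, 0, 1, 0, 0],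
        ![0, 0, 0, 1, 0], ![0, 0, 0, 0, 1], ![9, 1, -5, -3, -2],
        ![0, 0, 0, 0, 0]] with hB
    set M : Matrix (Fin 5) (Fin 5) ℝ :=
      !![3, 0, 0, 0, 27; 0, 3, 0, 0, 3; 0, 0, 0, 0, -15;
         0, 0, 3, 0, -9; 0, 0, 0, 3, -6] with hM
    set N : Matrix (Fin 5) (Fin 5) ℝ :=
      !![1/3, 0, 3/5, 0, 0; 0, 1/3, 1/15, 0, 0; 0, 0, -1/5, 1/3, 0;
         0, 0, -2/15, 0, 1/3; 0, 0, -1/15, 0, 0] with hN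
    have hMN : M * N = 1 := by
      ext i j
      fin_cases i <;> fin_cases j <;>
        simp [hM, hN, Matrix.mul_apply, Matrix.one_apply, Matrix.vecHead, Matrix.vecTail, Fin.sum_univ_five] <;> norm_num
    have hinv : Invertible M := invertibleOfRightInverse M N hMN
    set e : (Fin 5 → ℝ) ≃ₗ[ℝ] (Fin 5 → ℝ) := M.toLinearEquiv' hinv with he
    have he_apply : ∀ y, e y = M.mulVec y := fun y => rfl
    set O : Set (Fin 5 → ℝ) :=
      {y | ∀ j, 0 < y j} ∩ {y | ∑ j, y j < 1} with hO
    have hOopen : IsOpen O := by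
      apply IsOpen.inter
      · have : {y : Fin 5 → ℝ | ∀ j, 0 < y j} = ⋂ j, {y | 0 < y j} := by
          ext y; simp
        rw [this]
        exact isOpen_iInter_of_finite fun j =>
          isOpen_lt continuous_const (continuous_apply j)
      · exact isOpen_lt (by continuity) continuous_const
    set U : Set (Fin 5 → ℝ) := e '' O with hU
    have hUopen : IsOpen U := by
      have := e.toContinuousLinearEquiv.toHomeomorph.isOpenMap O hOopen
      convert this using 1
      rfl
    -- U ⊆ 3 • Δ
    have hUsub : U ⊆ (3 : ℝ) • convexHull ℝ (Set.range B) := by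
      rintro _ ⟨y, ⟨hy1, hy2⟩, rfl⟩
      simp only [Set.mem_setOf_eq, Fin.sum_univ_five] at hy1 hy2
      rw [he_apply]
      set w : Fin 7 → ℝ :=
        ![y 0, y 1, 0, y 2, y 3, y 4, 1 - ∑ j, y j] with hw
      have hw0 : ∀ k ∈ Finset.univ, 0 ≤ w k := by
        intro k _
        fin_cases k <;>
          simp [hw, Fin.sum_univ_five, show (5:Fin 7) = Fin.succ 4 from rfl, show (6:Fin 7) = Fin.succ (Fin.succ 4) from rfl, Matrix.cons_val_succ] <;>
          first
            | exact le_of_lt (hy1 _)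
            | linarith [hy1 0, hy1 1, hy1 2, hy1 3, hy1 4]
      have hw1 : ∑ k, w k = 1 := by
        simp [hw, Fin.sum_univ_seven, Fin.sum_univ_five, show (5:Fin 7) = Fin.succ 4 from rfl, show (6:Fin 7) = Fin.succ (Fin.succ 4) from rfl, Matrix.cons_val_succ]
        try ring
      have hmem : Finset.univ.centerMass w B ∈ convexHull ℝ (Set.range B) :=
        Finset.centerMass_mem_convexHull _ hw0 (by rw [hw1]; norm_num)
          (fun k _ => Set.mem_range_self k)
      have hcm : Finset.univ.centerMass w B = ∑ k, w k • B k :=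
        Finset.centerMass_eq_of_sum_1 _ _ hw1
      have heq : M.mulVec y = (3 : ℝ) • Finset.univ.centerMass w B := by
        rw [hcm]
        funext i
        simp only [Pi.smul_apply, Finset.sum_apply, smul_eq_mul]
        fin_cases i <;>
          simp [hw, hB, hM, Matrix.mulVec, dotProduct,
            Fin.sum_univ_five, Fin.sum_univ_seven, show (5:Fin 7) = Fin.succ 4 from rfl, show (6:Fin 7) = Fin.succ (Fin.succ 4) from rfl, Matrix.cons_val_succ] <;> ring
      rw [heq]
      exact Set.smul_mem_smul_set hmem
    -- the point is in U
    have hpU : ![(2 : ℝ), 1, -1, 0, 0] ∈ U := by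
      refine ⟨![1/15, 4/15, 1/5, 2/15, 1/15], ⟨?_, ?_⟩, ?_⟩
      · intro j; fin_cases j <;> norm_num
      · simp [Fin.sum_univ_five]; norm_num
      · rw [he_apply]
        funext i
        fin_cases i <;>
          simp [hM, Matrix.mulVec, dotProduct, Fin.sum_univ_five] <;>
          norm_num
    exact interior_maximal hUsub hUopen hpU
end
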